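/- arXiv:2510.21589 — 10 statements merged into one kernel-verified Lean document; each statement's English description precedes it below -/
import Mathlib

section
/- If f: {0,1}^n → {0,1} is unate with f^{-1}(1) nonempty, then for every coordinate i ∈ [n] with d^f_i ≠ *, the set Edge_i^{1−d^f_i}(f) is empty; i.e., a unate function has no strictly (1−d^f_i)-monotone edge in any direction i where its bias vector is fixed. -/
open Finset

/-- The set of satisfying assignments of a Boolean function on `{0,1}^n`. -/
def satSet (n : ℕ) (f : (Fin n → Bool) → Bool) : Finset (Fin n → Bool) :=
  Finset.univ.filter (fun x => f x = true)

/-- Relative distance `|f⁻¹(1) Δ g⁻¹(1)| / |f⁻¹(1)|`. -/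
noncomputable def reldist (n : ℕ) (f g : (Fin n → Bool) → Bool) : ℝ :=
  ((symmDiff (satSet n f) (satSet n g)).card : ℝ) / ((satSet n f).card : ℝ)

/-- A Boolean function is unate if in each coordinate it is either monotone
non-decreasing or monotone non-increasing. -/
def Unate (n : ℕ) (f : (Fin n → Bool) → Bool) : Prop :=
  ∀ i : Fin n,
    (∀ x, f (Function.update x i false) = true → f (Function.update x i true) = true) ∨
    (∀ x, f (Function.update x i true) = true → f (Function.update x i false) = true)

/-- The set of edges in direction `i` that are strictly `b`-monotone in `f`,
each edge `{x^{i←0}, x^{i←1}}` being represented by its lower endpoint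
(the point whose `i`-th bit is `false`). -/
def edgeSet (n : ℕ) (f : (Fin n → Bool) → Bool) (i : Fin n) (b : Bool) :
    Finset (Fin n → Bool) :=
  Finset.univ.filter (fun x =>
    x i = false ∧ f x = !b ∧ f (Function.update x i true) = b)

/-- `Pr_{z ~ f⁻¹(1)}[z_i = b]`. -/
noncomputable def prCoord (n : ℕ) (f : (Fin n → Bool) → Bool) (i : Fin n) (b : Bool) : ℝ :=
  (((satSet n f).filter (fun z => z i = b)).card : ℝ) / ((satSet n f).card : ℝ)

/-- The bias vector `d^f ∈ {0,1,*}^n` of `f`, encoded with `Option Bool`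
(`some b` for a fixed bit `b`, `none` for `*`). -/
noncomputable def biasVec (n : ℕ) (f : (Fin n → Bool) → Bool) (i : Fin n) : Option Bool :=
  if 0.6 < prCoord n f i true then some true
  else if 0.6 < prCoord n f i false then some false
  else none

/-- `x` with its `i`-th bit flipped. -/
def flipBit (n : ℕ) (x : Fin n → Bool) (i : Fin n) : Fin n → Bool :=
  Function.update x i (!(x i))

/-- The `(r,a)`-truncation of `f`. -/
noncomputable def trunc (n : ℕ) (f : (Fin n → Bool) → Bool) (r : ℝ) (a : Fin n → Bool) :
    (Fin n → Bool) → Bool :=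
  fun x => if (hammingDist x a : ℝ) ≤ r then f x else false

/-- Distance `Δ(x, d)` from a point to a partial string `d ∈ {0,1,*}^n`:
the number of fixed coordinates of `d` on which `x` disagrees with `d`. -/
def distPartial (n : ℕ) (x : Fin n → Bool) (d : Fin n → Option Bool) : ℕ :=
  (Finset.univ.filter (fun i => ∃ b, d i = some b ∧ x i ≠ b)).card

/-- The `(M, d̃)`-truncation of `f` for a partial string `d̃`. -/
noncomputable def truncP (n : ℕ) (f : (Fin n → Bool) → Bool) (M : ℝ)
    (d : Fin n → Option Bool) : (Fin n → Bool) → Bool :=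
  fun x => if (distPartial n x d : ℝ) ≤ M then f x else false


lemma card_filter_mono (n : ℕ) (f : (Fin n → Bool) → Bool) (i : Fin n) (c : Bool)
    (h : ∀ x, f x = true → x i = c → f (Function.update x i (!c)) = true) :
    ((satSet n f).filter (fun z => z i = c)).card ≤
      ((satSet n f).filter (fun z => z i = !c)).card := by
  apply Finset.card_le_card_of_injOn (fun z => Function.update z i (!c))
  · intro z hz
    simp only [Finset.mem_coe, satSet, Finset.mem_filter, Finset.mem_univ, true_and] at hz ⊢
    exact ⟨h z hz.1 hz.2, by simp⟩
  · intro z hz w hw he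
    simp only [Finset.mem_coe, satSet, Finset.mem_filter, Finset.mem_univ, true_and] at hz hw
    funext j
    by_cases hj : j = i
    · subst hj; rw [hz.2, hw.2]
    · have := congrFun he j
      simpa [Function.update_of_ne hj] using this

lemma prCoord_add_one (n : ℕ) (f : (Fin n → Bool) → Bool) (i : Fin n)
    (hf : (satSet n f).Nonempty) :
    prCoord n f i true + prCoord n f i false = 1 := by
  have hpos : (0:ℝ) < ((satSet n f).card : ℝ) := by
    exact_mod_cast Finset.card_pos.mpr hf
  have hcf : ((satSet n f).filter (fun z => z i = false)) =
      (satSet n f).filter (fun z => ¬ z i = true) := by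
    apply Finset.filter_congr; intro z _; simp [Bool.not_eq_true]
  unfold prCoord
  rw [← add_div, div_eq_one_iff_eq hpos.ne', hcf]
  exact_mod_cast Finset.card_filter_add_card_filter_not (s := satSet n f) (fun z => z i = true)

lemma prCoord_le (n : ℕ) (f : (Fin n → Bool) → Bool) (i : Fin n) (c : Bool)
    (h : ∀ x, f x = true → x i = c → f (Function.update x i (!c)) = true) :
    prCoord n f i c ≤ prCoord n f i (!c) := by
  unfold prCoord
  have := card_filter_mono n f i c h
  gcongr

/-- A unate function has no strictly `(1 - d^f_i)`-monotone edge in any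
direction `i` where its bias vector is fixed. -/
theorem unate_edgeSet_opposite_bias_empty (n : ℕ) (f : (Fin n → Bool) → Bool)
    (hU : Unate n f) (hf : (satSet n f).Nonempty)
    (i : Fin n) (b : Bool) (hb : biasVec n f i = some b) :
    edgeSet n f i (!b) = ∅ := by
  rw [Finset.eq_empty_iff_forall_notMem]
  intro x hx
  simp only [edgeSet, Finset.mem_filter, Finset.mem_univ, true_and, Bool.not_not] at hx
  obtain ⟨hxi, hfx, hfx'⟩ := hx
  have hxeq : Function.update x i false = x := by
    rw [← hxi]; exact Function.update_eq_self i x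
  unfold biasVec at hb
  split_ifs at hb with h1 h2
  all_goals simp only [Option.some.injEq] at hb
  · -- b = true, 0.6 < pr true
    subst hb
    rcases hU i with hup | hdown
    · exact absurd (hup x (by rw [hxeq]; exact hfx)) (by simp [hfx'])
    · have h : ∀ z, f z = true → z i = true → f (Function.update z i (!true)) = true := by
        intro z hz hzi
        apply hdown
        rwa [show Function.update z i true = z by rw [← hzi]; exact Function.update_eq_self i z]
      have hle := prCoord_le n f i true h
      have hsum := prCoord_add_one n f i hf
      simp only [Bool.not_true] at hle
      linarith
  · -- b = false, ¬ 0.6 < pr true, 0.6 < pr false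
    subst hb
    rcases hU i with hup | hdown
    · have h : ∀ z, f z = true → z i = false → f (Function.update z i (!false)) = true := by
        intro z hz hzi
        apply hup
        rwa [show Function.update z i false = z by rw [← hzi]; exact Function.update_eq_self i z]
      have hle := prCoord_le n f i false h
      simp only [Bool.not_false] at hle
      linarith
    · have h1 := hdown (Function.update x i true)
      simp only [Function.update_idem] at h1
      have := h1 hfx'
      rw [hxeq] at this
      simp [hfx] at this
end

section
/- Let f: {0,1}^n → {0,1} have f^{-1}(1) nonempty with N := |f^{-1}(1)|, and suppose f is ε-far from unate in relative distance, i.e., reldist(f,g) ≥ ε for every unate g: {0,1}^n → {0,1}. Then for every vector d ∈ {0,1}^n, the sum over i ∈ [n] of |Edge_i^{1−d_i}(f)| is at least εN/8. -/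
open Finset

namespace FarUnate

variable {n : ℕ}

/-- monotone "toward `c`" in coordinate `i`. -/
def Mono (n : ℕ) (f : (Fin n → Bool) → Bool) (i : Fin n) (c : Bool) : Prop :=
  ∀ x, f (Function.update x i (!c)) = true → f (Function.update x i c) = true

/-- sort operator along coordinate `i` toward `c`. -/
def sortOp (n : ℕ) (f : (Fin n → Bool) → Bool) (i : Fin n) (c : Bool) :
    (Fin n → Bool) → Bool :=
  fun x => if x i = c then f (Function.update x i false) || f (Function.update x i true)
           else f (Function.update x i false) && f (Function.update x i true)

lemma update_self_of {x : Fin n → Bool} {i : Fin n} {b : Bool} (h : x i = b) :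
    Function.update x i b = x := by
  rw [← h]; exact Function.update_eq_self i x

lemma sortOp_eval (f : (Fin n → Bool) → Bool) (i : Fin n) (c : Bool) (x : Fin n → Bool)
    {bb : Bool} (hxi : x i = bb) :
    sortOp n f i c x =
      if bb = c then f (Function.update x i false) || f (Function.update x i true)
      else f (Function.update x i false) && f (Function.update x i true) := by
  simp [sortOp, hxi]

lemma unate_of_mono (f : (Fin n → Bool) → Bool) (d : Fin n → Bool)
    (h : ∀ i, Mono n f i (d i)) : Unate n f := by
  intro i
  have hi := h i
  cases hd : d i with
  | false =>
      right; rw [hd] at hi; intro x hx; exact hi x (by simpa using hx)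
  | true =>
      left; rw [hd] at hi; intro x hx; exact hi x (by simpa using hx)

lemma sortOp_mono_self (f : (Fin n → Bool) → Bool) (i : Fin n) (c : Bool) :
    Mono n (sortOp n f i c) i c := by
  intro x hx
  have h1 : (Function.update x i (!c)) i = !c := Function.update_self i (!c) x
  have h2 : (Function.update x i c) i = c := Function.update_self i c x
  rw [sortOp_eval f i c _ h1] at hx
  rw [sortOp_eval f i c _ h2]
  simp only [Function.update_idem] at hx ⊢
  have : ¬ ((!c) = c) := by cases c <;> simp
  rw [if_neg this] at hx
  rw [if_pos trivial]
  simp only [Bool.and_eq_true] at hx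
  simp [hx.1]

lemma sortOp_mono_other (f : (Fin n → Bool) → Bool) {i j : Fin n} (hij : j ≠ i)
    (c c' : Bool) (h : Mono n f j c') : Mono n (sortOp n f i c) j c' := by
  intro x hx
  have h1 : (Function.update x j (!c')) i = x i := Function.update_of_ne hij.symm _ x
  have h2 : (Function.update x j c') i = x i := Function.update_of_ne hij.symm _ x
  rw [sortOp_eval f i c _ h1] at hx
  rw [sortOp_eval f i c _ h2]
  have e0 : ∀ b : Bool, Function.update (Function.update x j (!c')) i b
      = Function.update (Function.update x i b) j (!c') := fun b =>
    Function.update_comm hij _ _ x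
  have e1 : ∀ b : Bool, Function.update (Function.update x j c') i b
      = Function.update (Function.update x i b) j c' := fun b =>
    Function.update_comm hij _ _ x
  rw [e0 false, e0 true] at hx
  rw [e1 false, e1 true]
  by_cases hc : x i = c
  · rw [if_pos hc] at hx ⊢
    simp only [Bool.or_eq_true] at hx ⊢
    rcases hx with hx | hx
    · exact Or.inl (h _ hx)
    · exact Or.inr (h _ hx)
  · rw [if_neg hc] at hx ⊢
    simp only [Bool.and_eq_true] at hx ⊢
    exact ⟨h _ hx.1, h _ hx.2⟩

end FarUnate

namespace FarUnate
variable {n : ℕ}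

lemma sortOp_ne_iff (f : (Fin n → Bool) → Bool) (i : Fin n) (c : Bool) (x : Fin n → Bool) :
    sortOp n f i c x ≠ f x ↔
      (f (Function.update x i (!c)) = true ∧ f (Function.update x i c) = false) := by
  have hx0 : sortOp n f i c x =
      if x i = c then f (Function.update x i false) || f (Function.update x i true)
      else f (Function.update x i false) && f (Function.update x i true) := rfl
  cases hxi : x i with
  | false =>
      have hfx : f x = f (Function.update x i false) := by rw [update_self_of hxi]
      rw [hx0, hxi, hfx]
      cases c <;> cases hP : f (Function.update x i false) <;>
        cases hQ : f (Function.update x i true) <;> simp [hP, hQ]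
  | true =>
      have hfx : f x = f (Function.update x i true) := by rw [update_self_of hxi]
      rw [hx0, hxi, hfx]
      cases c <;> cases hP : f (Function.update x i false) <;>
        cases hQ : f (Function.update x i true) <;> simp [hP, hQ]

lemma symmDiff_satSet (f g : (Fin n → Bool) → Bool) :
    symmDiff (satSet n f) (satSet n g) = Finset.univ.filter (fun x => g x ≠ f x) := by
  ext x
  simp only [Finset.mem_symmDiff, satSet, Finset.mem_filter, Finset.mem_univ, true_and]
  cases f x <;> cases g x <;> simp

lemma card_diff_sortOp_le (f : (Fin n → Bool) → Bool) (i : Fin n) (c : Bool) :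
    (symmDiff (satSet n f) (satSet n (sortOp n f i c))).card
      ≤ 2 * (edgeSet n f i (!c)).card := by
  rw [symmDiff_satSet]
  have hD : (Finset.univ.filter (fun x => sortOp n f i c x ≠ f x)) =
      Finset.univ.filter (fun x =>
        f (Function.update x i (!c)) = true ∧ f (Function.update x i c) = false) := by
    ext x; simp only [Finset.mem_filter, Finset.mem_univ, true_and, sortOp_ne_iff]
  rw [hD]
  set D := Finset.univ.filter (fun x : Fin n → Bool =>
    f (Function.update x i (!c)) = true ∧ f (Function.update x i c) = false) with hDdef
  have hsplit : (D.filter (fun x => x i = false)).card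
      + (D.filter (fun x => ¬ (x i = false))).card = D.card :=
    Finset.card_filter_add_card_filter_not _
  have hpart0 : D.filter (fun x => x i = false) = edgeSet n f i (!c) := by
    ext x
    simp only [hDdef, edgeSet, Finset.mem_filter, Finset.mem_univ, true_and, Bool.not_not]
    cases c <;> simp only [Bool.not_true, Bool.not_false] <;> constructor
    · rintro ⟨⟨h1, h2⟩, h3⟩
      exact ⟨h3, (update_self_of h3) ▸ h2, h1⟩
    · rintro ⟨h3, h1, h2⟩
      exact ⟨⟨h2, by rw [update_self_of h3]; exact h1⟩, h3⟩
    · rintro ⟨⟨h1, h2⟩, h3⟩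
      exact ⟨h3, (update_self_of h3) ▸ h1, h2⟩
    · rintro ⟨h3, h1, h2⟩
      exact ⟨⟨by rw [update_self_of h3]; exact h1, h2⟩, h3⟩
  have hmaps : ∀ x ∈ D.filter (fun x => ¬ (x i = false)),
      Function.update x i false ∈ D.filter (fun x => x i = false) := by
    intro x hx
    simp only [hDdef, Finset.mem_filter, Finset.mem_univ, true_and,
      Function.update_idem] at hx ⊢
    exact ⟨hx.1, Function.update_self i false x⟩
  have hinj : Set.InjOn (fun x => Function.update x i false)
      ((D.filter (fun x => ¬ (x i = false)) : Finset (Fin n → Bool)) :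
        Set (Fin n → Bool)) := by
    intro x hx y hy hxy
    simp only [Finset.coe_filter, Set.mem_setOf_eq, Bool.not_eq_false] at hx hy
    funext j
    by_cases hji : j = i
    · subst hji; rw [hx.2, hy.2]
    · have := congrFun hxy j
      simpa [Function.update_of_ne hji] using this
  have hpart1 : (D.filter (fun x => ¬ (x i = false))).card
      ≤ (D.filter (fun x => x i = false)).card :=
    Finset.card_le_card_of_injOn _ hmaps hinj
  have h0 : (D.filter (fun x => x i = false)).card = (edgeSet n f i (!c)).card := by
    rw [hpart0]
  rw [← hsplit, h0, two_mul]
  exact Nat.add_le_add_left (hpart1.trans h0.le) _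

end FarUnate
namespace FarUnate
variable {n : ℕ}

lemma square_le (bb a₁ a₂ b₁ b₂ : Bool) :
    ((if (a₁ && a₂) = !bb ∧ (b₁ && b₂) = bb then 1 else 0) +
     (if (a₁ || a₂) = !bb ∧ (b₁ || b₂) = bb then 1 else 0) : ℕ) ≤
    ((if a₁ = !bb ∧ b₁ = bb then 1 else 0) +
     (if a₂ = !bb ∧ b₂ = bb then 1 else 0)) := by
  cases bb <;> cases a₁ <;> cases a₂ <;> cases b₁ <;> cases b₂ <;> simp

lemma square_le' (bb a₁ a₂ b₁ b₂ : Bool) :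
    ((if (a₁ || a₂) = !bb ∧ (b₁ || b₂) = bb then 1 else 0) +
     (if (a₁ && a₂) = !bb ∧ (b₁ && b₂) = bb then 1 else 0) : ℕ) ≤
    ((if a₁ = !bb ∧ b₁ = bb then 1 else 0) +
     (if a₂ = !bb ∧ b₂ = bb then 1 else 0)) := by
  rw [add_comm]; exact square_le bb a₁ a₂ b₁ b₂

lemma edge_card_eq_sum (h : (Fin n → Bool) → Bool) (i j : Fin n) (hij : j ≠ i) (b : Bool) :
    (edgeSet n h j b).card =
      ∑ y ∈ Finset.univ.filter (fun y : Fin n → Bool => y j = false ∧ y i = false),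
        ((if h y = !b ∧ h (Function.update y j true) = b then 1 else 0) +
         (if h (Function.update y i true) = !b ∧
             h (Function.update (Function.update y i true) j true) = b then 1 else 0)) := by
  set P := Finset.univ.filter (fun y : Fin n → Bool => y j = false ∧ y i = false) with hP
  rw [Finset.sum_add_distrib, ← Finset.card_filter, ← Finset.card_filter]
  have hsplit : ((edgeSet n h j b).filter (fun y => y i = false)).card
      + ((edgeSet n h j b).filter (fun y => ¬ (y i = false))).card
      = (edgeSet n h j b).card :=
    Finset.card_filter_add_card_filter_not _
  have h1 : (edgeSet n h j b).filter (fun y => y i = false) =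
      P.filter (fun y => h y = !b ∧ h (Function.update y j true) = b) := by
    ext y
    simp only [hP, edgeSet, Finset.mem_filter, Finset.mem_univ, true_and]
    tauto
  have h2 : ((edgeSet n h j b).filter (fun y => ¬ (y i = false))).card =
      (P.filter (fun y => h (Function.update y i true) = !b ∧
        h (Function.update (Function.update y i true) j true) = b)).card := by
    refine Finset.card_bij' (fun y _ => Function.update y i false)
      (fun y _ => Function.update y i true) ?_ ?_ ?_ ?_
    · intro a ha
      simp only [edgeSet, hP, Finset.mem_filter, Finset.mem_univ, true_and] at ha ⊢
      obtain ⟨⟨haj, hab, hab'⟩, hai⟩ := ha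
      have hat : a i = true := by revert hai; cases a i <;> simp
      have hsa : Function.update a i true = a := update_self_of hat
      refine ⟨⟨?_, Function.update_self i false a⟩, ?_, ?_⟩
      · rw [Function.update_of_ne hij]; exact haj
      · rw [Function.update_idem, hsa]; exact hab
      · rw [Function.update_idem, hsa]; exact hab'
    · intro a ha
      simp only [edgeSet, hP, Finset.mem_filter, Finset.mem_univ, true_and] at ha ⊢
      obtain ⟨⟨haj, hai⟩, hab, hab'⟩ := ha
      refine ⟨⟨?_, hab, hab'⟩, ?_⟩
      · rw [Function.update_of_ne hij]; exact haj
      · rw [Function.update_self]; simp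
    · intro a ha
      simp only [edgeSet, Finset.mem_filter, Finset.mem_univ, true_and] at ha
      have hat : a i = true := by
        have h2 := ha.2; revert h2; cases a i <;> simp
      show Function.update (Function.update a i false) i true = a
      rw [Function.update_idem]; exact update_self_of hat
    · intro a ha
      simp only [hP, Finset.mem_filter, Finset.mem_univ, true_and] at ha
      show Function.update (Function.update a i true) i false = a
      rw [Function.update_idem]; exact update_self_of ha.1.2
  rw [← hsplit, h2, h1]

lemma card_edge_sortOp_le (f : (Fin n → Bool) → Bool) {i j : Fin n} (hij : j ≠ i)
    (c b : Bool) :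
    (edgeSet n (sortOp n f i c) j b).card ≤ (edgeSet n f j b).card := by
  rw [edge_card_eq_sum (sortOp n f i c) i j hij b, edge_card_eq_sum f i j hij b]
  apply Finset.sum_le_sum
  intro y hy
  simp only [Finset.mem_filter, Finset.mem_univ, true_and] at hy
  obtain ⟨hyj, hyi⟩ := hy
  have hiupdj : (Function.update y j true) i = y i :=
    Function.update_of_ne hij.symm _ _
  have hiupdj0 : (Function.update y j true) i = false := by rw [hiupdj, hyi]
  have hz : Function.update (Function.update y i true) j true
      = Function.update (Function.update y j true) i true :=
    (Function.update_comm hij true true y).symm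
  have e1 : sortOp n f i c y =
      if false = c then f y || f (Function.update y i true)
      else f y && f (Function.update y i true) := by
    rw [sortOp_eval f i c y hyi, update_self_of hyi]
  have e2 : sortOp n f i c (Function.update y j true) =
      if false = c then
        f (Function.update y j true)
          || f (Function.update (Function.update y i true) j true)
      else f (Function.update y j true)
          && f (Function.update (Function.update y i true) j true) := by
    rw [sortOp_eval f i c _ hiupdj0, update_self_of hiupdj0, hz]
  have e3 : sortOp n f i c (Function.update y i true) =
      if true = c then f y || f (Function.update y i true)
      else f y && f (Function.update y i true) := by
    rw [sortOp_eval f i c _ (Function.update_self i true y)]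
    rw [Function.update_idem, Function.update_idem, update_self_of hyi]
  have e4 : sortOp n f i c (Function.update (Function.update y i true) j true) =
      if true = c then
        f (Function.update y j true)
          || f (Function.update (Function.update y i true) j true)
      else f (Function.update y j true)
          && f (Function.update (Function.update y i true) j true) := by
    rw [hz, sortOp_eval f i c _ (by rw [Function.update_self] :
        (Function.update (Function.update y j true) i true) i = true)]
    rw [Function.update_idem, Function.update_idem, update_self_of hiupdj0, ← hz]
  cases c
  · rw [e1.trans (if_pos rfl), e2.trans (if_pos rfl),
      e3.trans (if_neg (by simp)), e4.trans (if_neg (by simp))]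
    exact square_le' b _ _ _ _
  · rw [e1.trans (if_neg (by simp)), e2.trans (if_neg (by simp)),
      e3.trans (if_pos rfl), e4.trans (if_pos rfl)]
    exact square_le b _ _ _ _

end FarUnate
namespace FarUnate
variable {n : ℕ}

def applySort (n : ℕ) (d : Fin n → Bool) :
    List (Fin n) → ((Fin n → Bool) → Bool) → ((Fin n → Bool) → Bool)
  | [], f => f
  | (i :: t), f => applySort n d t (sortOp n f i (d i))

lemma mono_applySort_of_not_mem (d : Fin n → Bool) :
    ∀ (L : List (Fin n)) (f : (Fin n → Bool) → Bool) (i : Fin n) (c : Bool),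
      i ∉ L → Mono n f i c → Mono n (applySort n d L f) i c := by
  intro L
  induction L with
  | nil => intro f i c _ h; exact h
  | cons j t ih =>
      intro f i c hi h
      have hij : i ≠ j := fun hh => hi (hh ▸ (List.mem_cons_self (a := j) (l := t)))
      exact ih _ i c (fun hh => hi (List.mem_cons_of_mem j hh))
        (sortOp_mono_other f hij (d j) c h)

lemma mono_applySort (d : Fin n → Bool) :
    ∀ (L : List (Fin n)), L.Nodup → ∀ (f : (Fin n → Bool) → Bool) (i : Fin n),
      i ∈ L → Mono n (applySort n d L f) i (d i) := by
  intro L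
  induction L with
  | nil => intro _ f i hi; exact absurd hi List.not_mem_nil
  | cons j t ih =>
      intro hnd f i hi
      rcases List.mem_cons.mp hi with rfl | hmem
      · exact mono_applySort_of_not_mem d t _ i (d i) (List.Nodup.notMem hnd)
          (sortOp_mono_self f i (d i))
      · exact ih (List.Nodup.of_cons hnd) _ i hmem

lemma diff_applySort_le (d : Fin n → Bool) :
    ∀ (L : List (Fin n)), L.Nodup → ∀ (f : (Fin n → Bool) → Bool),
      (symmDiff (satSet n f) (satSet n (applySort n d L f))).card ≤
        (L.map (fun i => 2 * (edgeSet n f i (!(d i))).card)).sum := by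
  intro L
  induction L with
  | nil =>
      intro _ f
      simp [applySort, symmDiff_self]
  | cons j t ih =>
      intro hnd f
      set f' := sortOp n f j (d j) with hf'
      have htri : symmDiff (satSet n f) (satSet n (applySort n d t f')) ≤
          symmDiff (satSet n f) (satSet n f')
            ⊔ symmDiff (satSet n f') (satSet n (applySort n d t f')) :=
        symmDiff_triangle _ _ _
      have hc1 : (symmDiff (satSet n f) (satSet n (applySort n d t f'))).card ≤
          (symmDiff (satSet n f) (satSet n f')).card
          + (symmDiff (satSet n f') (satSet n (applySort n d t f'))).card :=
        le_trans (Finset.card_le_card htri) (Finset.card_union_le _ _)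
      have hstep : (symmDiff (satSet n f) (satSet n f')).card
          ≤ 2 * (edgeSet n f j (!(d j))).card := card_diff_sortOp_le f j (d j)
      have htail : (symmDiff (satSet n f') (satSet n (applySort n d t f'))).card ≤
          (t.map (fun i => 2 * (edgeSet n f' i (!(d i))).card)).sum :=
        ih (List.Nodup.of_cons hnd) f'
      have hmono : (t.map (fun i => 2 * (edgeSet n f' i (!(d i))).card)).sum ≤
          (t.map (fun i => 2 * (edgeSet n f i (!(d i))).card)).sum := by
        apply List.sum_le_sum
        intro i hi
        have hij : i ≠ j := fun hh => (List.Nodup.notMem hnd) (hh ▸ hi)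
        exact Nat.mul_le_mul_left 2 (card_edge_sortOp_le f hij (d j) (!(d i)))
      calc (symmDiff (satSet n f) (satSet n (applySort n d (j :: t) f))).card
          = (symmDiff (satSet n f) (satSet n (applySort n d t f'))).card := rfl
        _ ≤ _ := hc1
        _ ≤ 2 * (edgeSet n f j (!(d j))).card
              + (t.map (fun i => 2 * (edgeSet n f i (!(d i))).card)).sum :=
            Nat.add_le_add hstep (le_trans htail hmono)
        _ = ((j :: t).map (fun i => 2 * (edgeSet n f i (!(d i))).card)).sum := by
            simp

end FarUnate

/-- If `f` is `ε`-far from unate in relative distance, then for every direction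
vector `d ∈ {0,1}^n`, the total number of edges violating `d`-monotonicity is
at least `εN/8`. -/
theorem far_from_unate_many_violations (n : ℕ) (f : (Fin n → Bool) → Bool)
    (hf : (satSet n f).Nonempty) (ε : ℝ)
    (hfar : ∀ g : (Fin n → Bool) → Bool, Unate n g → ε ≤ reldist n f g)
    (d : Fin n → Bool) :
    ε * ((satSet n f).card : ℝ) / 8 ≤ ∑ i : Fin n, ((edgeSet n f i (!(d i))).card : ℝ) := by
  set L : List (Fin n) := List.finRange n with hL
  set g : (Fin n → Bool) → Bool := FarUnate.applySort n d L f with hg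
  have hU : Unate n g :=
    FarUnate.unate_of_mono g d (fun i =>
      FarUnate.mono_applySort d L (List.nodup_finRange n) f i (List.mem_finRange i))
  have h1 : ε ≤ reldist n f g := hfar g hU
  have hNpos : (0 : ℝ) < ((satSet n f).card : ℝ) := by
    exact_mod_cast Finset.card_pos.mpr hf
  rw [reldist] at h1
  have h2 : ε * ((satSet n f).card : ℝ)
      ≤ ((symmDiff (satSet n f) (satSet n g)).card : ℝ) := by
    calc ε * ((satSet n f).card : ℝ)
        ≤ ((symmDiff (satSet n f) (satSet n g)).card : ℝ)
            / ((satSet n f).card : ℝ) * ((satSet n f).card : ℝ) := by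
          exact mul_le_mul_of_nonneg_right h1 (le_of_lt hNpos)
      _ = _ := div_mul_cancel₀ _ (ne_of_gt hNpos)
  have h3 : (symmDiff (satSet n f) (satSet n g)).card ≤
      (L.map (fun i => 2 * (edgeSet n f i (!(d i))).card)).sum :=
    FarUnate.diff_applySort_le d L (List.nodup_finRange n) f
  have h4 : (L.map (fun i => 2 * (edgeSet n f i (!(d i))).card)).sum
      = ∑ i : Fin n, 2 * (edgeSet n f i (!(d i))).card :=
    (Fin.sum_univ_def _).symm
  rw [h4] at h3
  have h5 : ((symmDiff (satSet n f) (satSet n g)).card : ℝ)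
      ≤ 2 * ∑ i : Fin n, ((edgeSet n f i (!(d i))).card : ℝ) := by
    have := (Nat.cast_le (α := ℝ)).mpr h3
    push_cast at this
    rw [Finset.mul_sum]
    convert this using 2
  have hS : (0 : ℝ) ≤ ∑ i : Fin n, ((edgeSet n f i (!(d i))).card : ℝ) :=
    Finset.sum_nonneg fun i _ => Nat.cast_nonneg _
  linarith
end

section
/- If f: {0,1}^n → {0,1} is unate with f^{-1}(1) nonempty and N := |f^{-1}(1)|, then for all z, z' ∈ f^{-1}(1), the Hamming distance Δ(z, z') is at most 2·log₂(N). -/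
open Finset

section Aux

variable {n : ℕ} {f : (Fin n → Bool) → Bool}

/-- Pushing a single coordinate toward the preferred direction. -/
lemma push_exists (hU : Unate n f) :
    ∃ g : Fin n → Bool, ∀ i x, f x = true → f (Function.update x i (g i)) = true := by
  classical
  have upd : ∀ (x : Fin n → Bool) (i : Fin n) (b : Bool), x i = b →
      Function.update x i b = x := by
    intro x i b h
    rw [← h]
    exact Function.update_eq_self i x
  refine ⟨fun i => if (∀ x, f (Function.update x i false) = true →
      f (Function.update x i true) = true) then true else false, fun i x hx => ?_⟩
  show f (Function.update x i (if (∀ x, f (Function.update x i false) = true →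
      f (Function.update x i true) = true) then true else false)) = true
  by_cases h : (∀ x, f (Function.update x i false) = true →
      f (Function.update x i true) = true)
  · rw [if_pos h]
    rcases Bool.eq_false_or_eq_true (x i) with hxi | hxi
    · rw [upd x i true hxi]; exact hx
    · exact h x (by rw [upd x i false hxi]; exact hx)
  · have hd := (hU i).resolve_left h
    rw [if_neg h]
    rcases Bool.eq_false_or_eq_true (x i) with hxi | hxi
    · exact hd x (by rw [upd x i true hxi]; exact hx)
    · rw [upd x i false hxi]; exact hx

lemma push_many (g : Fin n → Bool)
    (hg : ∀ i x, f x = true → f (Function.update x i (g i)) = true)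
    (S : Finset (Fin n)) (x : Fin n → Bool) (hx : f x = true) :
    f (fun i => if i ∈ S then g i else x i) = true := by
  classical
  induction S using Finset.induction_on with
  | empty => simpa using hx
  | @insert a S ha ih =>
      have hfun : (fun i => if i ∈ insert a S then g i else x i)
          = Function.update (fun i => if i ∈ S then g i else x i) a (g a) := by
        funext i
        by_cases hia : i = a
        · subst hia; simp [Function.update, ha]
        · simp [Function.update, hia, Finset.mem_insert]
      rw [hfun]
      exact hg a _ ih

lemma card_ge_pow (g : Fin n → Bool)
    (hg : ∀ i x, f x = true → f (Function.update x i (g i)) = true)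
    (z : Fin n → Bool) (hz : f z = true) (A : Finset (Fin n))
    (hA : ∀ i ∈ A, z i ≠ g i) :
    2 ^ A.card ≤ (satSet n f).card := by
  classical
  rw [← Finset.card_powerset]
  apply Finset.card_le_card_of_injOn (fun S => fun i => if i ∈ S then g i else z i)
  · intro S _
    simp only [satSet, Finset.mem_coe, Finset.mem_filter, Finset.mem_univ, true_and]
    exact push_many g hg S z hz
  · intro S hS T hT hST
    simp only [Finset.mem_coe, Finset.mem_powerset] at hS hT
    ext i
    have hci := congrFun hST i
    simp only at hci
    constructor
    · intro hi
      by_contra hiT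
      rw [if_pos hi, if_neg hiT] at hci
      exact hA i (hS hi) hci.symm
    · intro hi
      by_contra hiS
      rw [if_neg hiS, if_pos hi] at hci
      exact hA i (hT hi) hci

end Aux

/-- If `f` is unate, any two satisfying assignments have Hamming distance at
most `2·log₂ N`. -/
theorem unate_small_diameter (n : ℕ) (f : (Fin n → Bool) → Bool)
    (hU : Unate n f) (hf : (satSet n f).Nonempty)
    (z z' : Fin n → Bool) (hz : z ∈ satSet n f) (hz' : z' ∈ satSet n f) :
    (hammingDist z z' : ℝ) ≤ 2 * Real.logb 2 ((satSet n f).card : ℝ) := by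
  classical
  obtain ⟨g, hg⟩ := push_exists hU
  simp only [satSet, Finset.mem_filter] at hz hz'
  set A : Finset (Fin n) := Finset.univ.filter (fun i => z i ≠ z' i ∧ z i ≠ g i) with hAdef
  set B : Finset (Fin n) := Finset.univ.filter (fun i => z i ≠ z' i ∧ z' i ≠ g i) with hBdef
  have hbool : ∀ a b c : Bool, (a ≠ b) ↔ ((a ≠ b ∧ a ≠ c) ∨ (a ≠ b ∧ b ≠ c)) := by decide
  have hbool2 : ∀ a b c : Bool, (a ≠ b ∧ a ≠ c) → (a ≠ b ∧ b ≠ c) → False := by decide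
  have hsplit : A.card + B.card = hammingDist z z' := by
    have hD : hammingDist z z' = (Finset.univ.filter fun i => z i ≠ z' i).card := rfl
    rw [hD, ← Finset.card_union_of_disjoint]
    · congr 1
      rw [hAdef, hBdef, ← Finset.filter_or]
      apply Finset.filter_congr
      intro i _
      exact (hbool (z i) (z' i) (g i)).symm
    · rw [hAdef, hBdef, Finset.disjoint_filter]
      intro i _ h1 h2
      exact hbool2 (z i) (z' i) (g i) h1 h2
  have hcA : 2 ^ A.card ≤ (satSet n f).card :=
    card_ge_pow g hg z hz.2 A (fun i hi => by
      simp only [hAdef, Finset.mem_filter] at hi; exact hi.2.2)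
  have hcB : 2 ^ B.card ≤ (satSet n f).card :=
    card_ge_pow g hg z' hz'.2 B (fun i hi => by
      simp only [hBdef, Finset.mem_filter] at hi; exact hi.2.2)
  have hNpos : (0:ℝ) < ((satSet n f).card : ℝ) := by
    exact_mod_cast Finset.card_pos.mpr hf
  have key : ∀ m : ℕ, 2 ^ m ≤ (satSet n f).card →
      (m : ℝ) ≤ Real.logb 2 ((satSet n f).card : ℝ) := by
    intro m hm
    have h2 : ((2:ℝ) ^ m) ≤ ((satSet n f).card : ℝ) := by exact_mod_cast hm
    calc (m : ℝ) = Real.logb 2 ((2:ℝ) ^ m) := by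
          rw [Real.logb_pow, Real.logb_self_eq_one (by norm_num)]; ring
      _ ≤ Real.logb 2 ((satSet n f).card : ℝ) :=
          Real.logb_le_logb_of_le (by norm_num) (by positivity) h2
  have hA' := key A.card hcA
  have hB' := key B.card hcB
  have : (hammingDist z z' : ℝ) = (A.card : ℝ) + (B.card : ℝ) := by
    rw [← hsplit]; push_cast; ring
  rw [this]
  linarith
end

section
/- Let f: {0,1}^n → {0,1} be unate, let a ∈ f^{-1}(1), let N := |f^{-1}(1)|, and let r be a real number with r ≥ 2·log₂(N). Then f is equal to its (r, a)-truncation, i.e., f(x) = f_{r,a}(x) for all x ∈ {0,1}^n. -/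
open Finset

lemma my_sat_of_subset {n : ℕ} {f : (Fin n → Bool) → Bool} (g : Fin n → Bool)
    (hg : ∀ i y, f y = true → f (Function.update y i (g i)) = true)
    (z : Fin n → Bool) (hz : f z = true) (U : Finset (Fin n)) :
    f (fun i => if i ∈ U then g i else z i) = true := by
  classical
  induction U using Finset.induction_on with
  | empty => simpa using hz
  | @insert j U' hj ih =>
    have heq : (fun i => if i ∈ insert j U' then g i else z i)
        = Function.update (fun i => if i ∈ U' then g i else z i) j (g j) := by
      funext i
      by_cases h : i = j
      · subst h; simp [Function.update, hj]
      · simp [Function.update, h, Finset.mem_insert]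
    rw [heq]
    exact hg j _ ih

lemma my_pow_le_sat {n : ℕ} {f : (Fin n → Bool) → Bool} (g : Fin n → Bool)
    (hg : ∀ i y, f y = true → f (Function.update y i (g i)) = true)
    (z : Fin n → Bool) (hz : f z = true) (U : Finset (Fin n))
    (hne : ∀ i ∈ U, g i ≠ z i) :
    2 ^ U.card ≤ (satSet n f).card := by
  classical
  have h := Finset.card_le_card_of_injOn
    (f := fun V => fun i => if i ∈ V then g i else z i)
    (s := U.powerset) (t := satSet n f)
    (by
      intro V _
      simp only [satSet, Finset.coe_filter, Set.mem_setOf_eq, Finset.mem_filter, Finset.mem_univ, true_and]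
      exact my_sat_of_subset g hg z hz V)
    (by
      intro V hV W hW hEq
      rw [Finset.mem_coe, Finset.mem_powerset] at hV hW
      ext i
      by_cases hi : i ∈ U
      · have := congrFun hEq i
        by_cases hiV : i ∈ V <;> by_cases hiW : i ∈ W <;>
          simp [hiV, hiW] at this ⊢ <;>
          first
          | exact absurd this (hne i hi)
          | exact absurd this.symm (hne i hi)
      · constructor
        · intro h'; exact absurd (hV h') hi
        · intro h'; exact absurd (hW h') hi)
  simpa [Finset.card_powerset] using h

/-- A unate function equals its `(r,a)`-truncation for any `a ∈ f⁻¹(1)` and any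
radius `r ≥ 2·log₂ N`. -/
theorem unate_eq_trunc (n : ℕ) (f : (Fin n → Bool) → Bool) (hU : Unate n f)
    (a : Fin n → Bool) (ha : a ∈ satSet n f) (r : ℝ)
    (hr : 2 * Real.logb 2 ((satSet n f).card : ℝ) ≤ r) :
    ∀ x : Fin n → Bool, f x = trunc n f r a x := by
  classical
  intro x
  have hfa : f a = true := by simpa [satSet] using ha
  by_cases hfx : f x = true
  · -- need hammingDist x a ≤ r
    -- choose safe direction g
    have hsafe : ∀ i : Fin n, ∃ b : Bool, ∀ y, f y = true → f (Function.update y i b) = true := by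
      intro i
      rcases hU i with h | h
      · refine ⟨true, fun y hy => ?_⟩
        cases hyi : y i
        · have : Function.update y i false = y := by
            funext j; by_cases hj : j = i
            · subst hj; simp [Function.update, hyi]
            · simp [Function.update, hj]
          exact h y (by rw [this]; exact hy)
        · have : Function.update y i true = y := by
            funext j; by_cases hj : j = i
            · subst hj; simp [Function.update, hyi]
            · simp [Function.update, hj]
          rw [this]; exact hy
      · refine ⟨false, fun y hy => ?_⟩
        cases hyi : y i
        · have : Function.update y i false = y := by
            funext j; by_cases hj : j = i
            · subst hj; simp [Function.update, hyi]
            · simp [Function.update, hj]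
          rw [this]; exact hy
        · have : Function.update y i true = y := by
            funext j; by_cases hj : j = i
            · subst hj; simp [Function.update, hyi]
            · simp [Function.update, hj]
          exact h y (by rw [this]; exact hy)
    choose g hg using hsafe
    set D : Finset (Fin n) := Finset.univ.filter (fun i => x i ≠ a i) with hD
    set T : Finset (Fin n) := D.filter (fun i => x i = g i) with hT
    set S : Finset (Fin n) := D.filter (fun i => ¬ (x i = g i)) with hS
    have hgy : ∀ i (y : Fin n → Bool), f y = true → f (Function.update y i (g i)) = true :=
      fun i y hy => hg i y hy
    have h1 : 2 ^ T.card ≤ (satSet n f).card := by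
      refine my_pow_le_sat g hgy a hfa T ?_
      intro i hi
      simp only [hT, hD, Finset.mem_filter, Finset.mem_univ, true_and] at hi
      rw [← hi.2]; exact hi.1
    have h2 : 2 ^ S.card ≤ (satSet n f).card := by
      refine my_pow_le_sat g hgy x hfx S ?_
      intro i hi
      simp only [hS, hD, Finset.mem_filter, Finset.mem_univ, true_and] at hi
      intro h
      cases hxi : x i <;> cases hgi : g i <;> simp_all
    have hcard : T.card + S.card = D.card := Finset.card_filter_add_card_filter_not _
    have hdist : hammingDist x a = D.card := rfl
    have hNpos : 0 < (satSet n f).card := Finset.card_pos.mpr ⟨a, ha⟩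
    set N : ℕ := (satSet n f).card
    have hpow : 2 ^ (hammingDist x a) ≤ N ^ 2 := by
      rw [hdist, ← hcard, pow_add, sq]
      exact Nat.mul_le_mul h1 h2
    have hreal : (2:ℝ) ^ (hammingDist x a) ≤ (N:ℝ) ^ 2 := by
      exact_mod_cast hpow
    have hlog : (hammingDist x a : ℝ) ≤ 2 * Real.logb 2 (N:ℝ) := by
      have hNpos' : (0:ℝ) < (N:ℝ) := by exact_mod_cast hNpos
      have h2' : Real.logb 2 ((2:ℝ) ^ (hammingDist x a)) ≤ Real.logb 2 ((N:ℝ)^2) :=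
        Real.logb_le_logb_of_le (by norm_num) (by positivity) hreal
      rw [Real.logb_pow, Real.logb_pow, Real.logb_self_eq_one (by norm_num), mul_one] at h2'
      push_cast at h2'
      exact h2'
    have : (hammingDist x a : ℝ) ≤ r := le_trans hlog (le_trans (le_of_eq rfl) hr)
    simp [trunc, this]
  · have hfx' : f x = false := by simpa using hfx
    simp [trunc, hfx']
end

section
/- Let f: {0,1}^n → {0,1}, let a ∈ f^{-1}(1), let N := |f^{-1}(1)|, and let r be a real number with r ≥ 2·log₂(N). Then the truncation f_{r,a} satisfies f_{r,a}^{-1}(1) ⊆ f^{-1}(1), and the number of nontrivial coordinates of f_{r,a} (coordinates i with Pr_{z∼f_{r,a}^{-1}(1)}[z_i = 1] ∉ {0,1}) is at most r·N. -/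
open Finset

/-- For `a ∈ f⁻¹(1)` and radius `r ≥ 2·log₂ N`, the truncation `f_{r,a}`
satisfies `f_{r,a}⁻¹(1) ⊆ f⁻¹(1)` and has at most `r·N` nontrivial coordinates. -/
theorem trunc_subset_and_few_nontrivial (n : ℕ) (f : (Fin n → Bool) → Bool)
    (a : Fin n → Bool) (ha : a ∈ satSet n f) (r : ℝ)
    (hr : 2 * Real.logb 2 ((satSet n f).card : ℝ) ≤ r) :
    satSet n (trunc n f r a) ⊆ satSet n f ∧
    ((Finset.univ.filter (fun i : Fin n =>
        prCoord n (trunc n f r a) i true ≠ 0 ∧ prCoord n (trunc n f r a) i true ≠ 1)).card : ℝ)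
      ≤ r * ((satSet n f).card : ℝ) := by
  classical
  have hsub : satSet n (trunc n f r a) ⊆ satSet n f := by
    intro x hx
    simp only [satSet, mem_filter, mem_univ, true_and, trunc] at hx ⊢
    by_cases h : (hammingDist x a : ℝ) ≤ r
    · simpa [h] using hx
    · simp [h] at hx
  refine ⟨hsub, ?_⟩
  have hNpos : 0 < (satSet n f).card := card_pos.mpr ⟨a, ha⟩
  have hr0 : (0:ℝ) ≤ r := by
    refine le_trans ?_ hr
    have h1 : (1:ℝ) ≤ ((satSet n f).card : ℝ) := by exact_mod_cast hNpos
    have := Real.logb_nonneg (by norm_num : (1:ℝ) < 2) h1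
    linarith
  set g := trunc n f r a with hg
  have hdist : ∀ z ∈ satSet n g, (hammingDist z a : ℝ) ≤ r := by
    intro z hz
    simp only [satSet, mem_filter, mem_univ, true_and, hg, trunc] at hz
    by_cases h : (hammingDist z a : ℝ) ≤ r
    · exact h
    · simp [h] at hz
  have key : (Finset.univ.filter (fun i : Fin n =>
      prCoord n g i true ≠ 0 ∧ prCoord n g i true ≠ 1)) ⊆
      (satSet n g).biUnion (fun z => Finset.univ.filter (fun i => z i ≠ a i)) := by
    intro i hi
    simp only [mem_filter, mem_univ, true_and] at hi
    obtain ⟨h0, h1⟩ := hi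
    have hq : ((satSet n g).card : ℝ) ≠ 0 := by
      intro h
      exact h0 (by simp [prCoord, h])
    rw [mem_biUnion]
    by_contra hcon
    push_neg at hcon
    simp only [mem_filter, mem_univ, true_and, not_not] at hcon
    -- every z in satSet g agrees with a at i
    cases hai : a i with
    | false =>
      apply h0
      have : ((satSet n g).filter (fun z => z i = true)) = ∅ := by
        ext z
        simp only [mem_filter, notMem_empty, iff_false, not_and]
        intro hz hzt
        have := hcon z hz
        rw [hai] at this
        simp [hzt] at this
      simp [prCoord, this]
    | true =>
      apply h1
      have : ((satSet n g).filter (fun z => z i = true)) = satSet n g := by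
        apply Finset.filter_true_of_mem
        intro z hz
        rw [hcon z hz, hai]
      rw [prCoord, this, div_self hq]
  have hcard : ((Finset.univ.filter (fun i : Fin n =>
      prCoord n g i true ≠ 0 ∧ prCoord n g i true ≠ 1)).card : ℝ)
      ≤ ∑ z ∈ satSet n g, ((hammingDist z a : ℕ) : ℝ) := by
    have h1 := Finset.card_le_card key
    have h2 := Finset.card_biUnion_le (s := satSet n g)
      (t := fun z => Finset.univ.filter (fun i => z i ≠ a i))
    have h3 : (Finset.univ.filter (fun i : Fin n =>
        prCoord n g i true ≠ 0 ∧ prCoord n g i true ≠ 1)).card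
        ≤ ∑ z ∈ satSet n g, (Finset.univ.filter (fun i => z i ≠ a i)).card :=
      le_trans h1 h2
    have h4 : ∀ z : Fin n → Bool,
        (Finset.univ.filter (fun i => z i ≠ a i)).card = hammingDist z a := by
      intro z; rfl
    calc ((Finset.univ.filter (fun i : Fin n =>
        prCoord n g i true ≠ 0 ∧ prCoord n g i true ≠ 1)).card : ℝ)
        ≤ ((∑ z ∈ satSet n g, (Finset.univ.filter (fun i => z i ≠ a i)).card : ℕ) : ℝ) := by
          exact_mod_cast h3
      _ = ∑ z ∈ satSet n g, ((hammingDist z a : ℕ) : ℝ) := by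
          push_cast
          exact Finset.sum_congr rfl (fun z _ => by rw [h4])
  calc ((Finset.univ.filter (fun i : Fin n =>
      prCoord n g i true ≠ 0 ∧ prCoord n g i true ≠ 1)).card : ℝ)
      ≤ ∑ z ∈ satSet n g, ((hammingDist z a : ℕ) : ℝ) := hcard
    _ ≤ ∑ _z ∈ satSet n g, r := Finset.sum_le_sum (fun z hz => hdist z hz)
    _ = ((satSet n g).card : ℝ) * r := by rw [Finset.sum_const, nsmul_eq_mul]
    _ ≤ ((satSet n f).card : ℝ) * r := by
        apply mul_le_mul_of_nonneg_right _ hr0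
        exact_mod_cast Finset.card_le_card hsub
    _ = r * ((satSet n f).card : ℝ) := mul_comm _ _
end

section
/- Let d̃ ∈ {0,1,*}^n be an arbitrary partial string, let ε > 0, and let h: {0,1}^n → {0,1} have h^{-1}(1) nonempty with reldist(h, g) ≥ ε/2 for every unate g: {0,1}^n → {0,1}. Then at least one of the following holds: (i) Σ_{i ∈ Fixed(d̃)} |Edge_i^{1−d̃_i}(h)| ≥ (ε/32)·|h^{-1}(1)|, or (ii) Σ_{i ∈ Unfixed(d̃)} min(|Edge_i^0(h)|, |Edge_i^1(h)|) ≥ (ε/32)·|h^{-1}(1)|. -/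
open Finset

/-- The sort (shift) operator in direction `i` with orientation `σ`. -/
def sortF (n : ℕ) (f : (Fin n → Bool) → Bool) (i : Fin n) (σ : Bool) :
    (Fin n → Bool) → Bool :=
  fun x => if x i = σ then f (Function.update x i false) || f (Function.update x i true)
           else f (Function.update x i false) && f (Function.update x i true)

lemma mem_edgeSet {n : ℕ} {f : (Fin n → Bool) → Bool} {i : Fin n} {b : Bool}
    {x : Fin n → Bool} : x ∈ edgeSet n f i b ↔
      x i = false ∧ f x = !b ∧ f (Function.update x i true) = b := by
  simp [edgeSet]

/-- diff set -/
def diffSet (n : ℕ) (f g : (Fin n → Bool) → Bool) : Finset (Fin n → Bool) :=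
  Finset.univ.filter (fun x => f x ≠ g x)

lemma symmDiff_satSet (n : ℕ) (f g : (Fin n → Bool) → Bool) :
    symmDiff (satSet n f) (satSet n g) = diffSet n f g := by
  ext x
  simp only [Finset.mem_symmDiff, satSet, diffSet, Finset.mem_filter, Finset.mem_univ,
    true_and]
  cases f x <;> cases g x <;> simp

lemma diffSet_sort_subset (n : ℕ) (f : (Fin n → Bool) → Bool) (i : Fin n) (σ : Bool) :
    diffSet n f (sortF n f i σ) ⊆
      (edgeSet n f i (!σ)) ∪ (edgeSet n f i (!σ)).image (fun x => Function.update x i true) := by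
  intro x hx
  simp only [diffSet, Finset.mem_filter, Finset.mem_univ, true_and] at hx
  have hx0 : Function.update x i false ∈ edgeSet n f i (!σ) ∧
      (x = Function.update x i false ∨ x = Function.update (Function.update x i false) i true) := by
    rw [Function.update_idem]
    unfold sortF at hx
    by_cases hxi : x i = σ
    · rw [if_pos hxi] at hx
      cases σ
      · -- σ = false, x i = false, x = update x i false
        have hxeq : Function.update x i false = x := by
          rw [← hxi]; exact Function.update_eq_self i x
        rw [hxeq] at hx ⊢
        constructor
        · rw [mem_edgeSet]
          refine ⟨hxi, ?_, ?_⟩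
          · cases hfx : f x <;> cases hf1 : f (Function.update x i true) <;>
              simp_all
          · cases hfx : f x <;> cases hf1 : f (Function.update x i true) <;>
              simp_all
        · left; rfl
      · -- σ = true, x i = true, x = update x i true
        have hxeq : Function.update x i true = x := by
          rw [← hxi]; exact Function.update_eq_self i x
        rw [hxeq] at hx
        constructor
        · rw [mem_edgeSet]
          refine ⟨by simp, ?_, ?_⟩ <;>
          · try simp only [Function.update_idem, hxeq]
            cases hfx : f x <;> cases hf0 : f (Function.update x i false) <;>
              simp_all
        · right; simp [Function.update_idem, hxeq]
    · rw [if_neg hxi] at hx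
      have hxi' : x i = !σ := by cases hxi2 : x i <;> cases σ <;> simp_all
      cases σ
      · -- σ = false, x i = true
        have hxeq : Function.update x i true = x := by
          rw [show (true:Bool) = x i by simp [hxi']]; exact Function.update_eq_self i x
        constructor
        · rw [mem_edgeSet]
          refine ⟨by simp, ?_, ?_⟩ <;>
          · try simp only [Function.update_idem, hxeq]
            rw [hxeq] at hx
            cases hfx : f x <;> cases hf0 : f (Function.update x i false) <;>
              simp_all
        · right; simp [Function.update_idem, hxeq]
      · -- σ = true, x i = false
        have hxeq : Function.update x i false = x := by
          rw [show (false:Bool) = x i by simp [hxi']]; exact Function.update_eq_self i x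
        rw [hxeq] at hx ⊢
        constructor
        · rw [mem_edgeSet]
          refine ⟨hxi', ?_, ?_⟩ <;>
          · cases hfx : f x <;> cases hf1 : f (Function.update x i true) <;>
              simp_all
        · left; rfl
  rcases hx0 with ⟨hmem, heq⟩
  rcases heq with heq | heq
  · exact Finset.mem_union_left _ (by rw [heq]; exact hmem)
  · refine Finset.mem_union_right _ ?_
    rw [Finset.mem_image]
    exact ⟨Function.update x i false, hmem, heq.symm⟩

lemma card_diffSet_sort_le (n : ℕ) (f : (Fin n → Bool) → Bool) (i : Fin n) (σ : Bool) :
    (diffSet n f (sortF n f i σ)).card ≤ 2 * (edgeSet n f i (!σ)).card := by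
  have h1 := Finset.card_le_card (diffSet_sort_subset n f i σ)
  have h2 := Finset.card_union_le (edgeSet n f i (!σ))
    ((edgeSet n f i (!σ)).image (fun x => Function.update x i true))
  have h3 : ((edgeSet n f i (!σ)).image (fun x => Function.update x i true)).card
      ≤ (edgeSet n f i (!σ)).card := Finset.card_image_le
  omega

lemma edgeSet_sort_self (n : ℕ) (f : (Fin n → Bool) → Bool) (i : Fin n) (σ : Bool) :
    edgeSet n (sortF n f i σ) i (!σ) = ∅ := by
  rw [Finset.eq_empty_iff_forall_notMem]
  intro x hx
  rw [mem_edgeSet] at hx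
  obtain ⟨hxi, h0, h1⟩ := hx
  have hxeq : Function.update x i false = x := by
    rw [show (false:Bool) = x i by simp [hxi]]; exact Function.update_eq_self i x
  unfold sortF at h0 h1
  simp only [Function.update_idem, Function.update_self, hxeq, hxi] at h0 h1
  cases σ <;> cases hfx : f x <;> cases hf1 : f (Function.update x i true) <;> simp_all

/-- helper: filter over a pair -/
lemma card_filter_pair {α : Type*} [DecidableEq α] (a b : α) (hab : a ≠ b)
    (P : α → Prop) [DecidablePred P] :
    (({a, b} : Finset α).filter P).card =
      (if P a then 1 else 0) + (if P b then 1 else 0) := by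
  rw [show ({a, b} : Finset α) = insert a {b} from rfl, Finset.filter_insert,
    Finset.filter_singleton]
  split_ifs <;> simp_all [Finset.card_insert_of_notMem]

lemma square_ineq (n : ℕ) (f : (Fin n → Bool) → Bool) (i j : Fin n) (hij : j ≠ i)
    (σ c : Bool) (y : Fin n → Bool) (hyi : y i = false) :
    ((if y ∈ edgeSet n (sortF n f i σ) j c then 1 else 0)
      + (if Function.update y i true ∈ edgeSet n (sortF n f i σ) j c then 1 else 0) : ℕ)
    ≤ (if y ∈ edgeSet n f j c then 1 else 0)
      + (if Function.update y i true ∈ edgeSet n f j c then 1 else 0) := by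
  have hij' : i ≠ j := hij.symm
  by_cases hyj : y j = false
  · have hy0 : Function.update y i false = y := by
      rw [show (false:Bool) = y i by simp [hyi]]; exact Function.update_eq_self i y
    have e1 : Function.update (Function.update y j true) i false = Function.update y j true := by
      rw [Function.update_comm hij, hy0]
    have e2 : Function.update (Function.update y j true) i true
        = Function.update (Function.update y i true) j true := by
      rw [Function.update_comm hij]
    have e3 : Function.update (Function.update y i true) i false = y := by
      rw [Function.update_idem, hy0]
    have e4 : Function.update (Function.update y i true) i true
        = Function.update y i true := by rw [Function.update_idem]
    have e5 : Function.update y i true i = true := Function.update_self i true y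
    have e6 : Function.update y j true i = y i := Function.update_of_ne hij' true y
    have e7 : Function.update y i true j = y j := Function.update_of_ne hij true y
    have e8 : Function.update (Function.update (Function.update y i true) j true) i false
        = Function.update y j true := by
      rw [Function.update_comm hij', Function.update_idem, e1]
    have e9 : Function.update (Function.update (Function.update y i true) j true) i true
        = Function.update (Function.update y i true) j true := by
      rw [Function.update_comm hij', Function.update_idem, e2]
    have e10 : Function.update (Function.update y i true) j true i = true := by
      rw [Function.update_of_ne hij', Function.update_self]
    simp only [mem_edgeSet, sortF, e1, e2, e3, e4, e5, e6, e7, e8, e9, e10, hy0, hyi, hyj]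
    cases σ <;> cases c <;>
      cases hfy : f y <;> cases hf1 : f (Function.update y i true) <;>
      cases hf2 : f (Function.update y j true) <;>
      cases hf3 : f (Function.update (Function.update y i true) j true) <;>
      simp
  · have e7 : Function.update y i true j = y j := Function.update_of_ne hij true y
    simp [mem_edgeSet, e7, hyj]

lemma fiber_card (n : ℕ) (f : (Fin n → Bool) → Bool) (j : Fin n) (c : Bool) (i : Fin n)
    (y : Fin n → Bool) (hyi : y i = false) :
    ((edgeSet n f j c).filter (fun x => Function.update x i false = y)).card
      = (if y ∈ edgeSet n f j c then 1 else 0)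
        + (if Function.update y i true ∈ edgeSet n f j c then 1 else 0) := by
  have hy0 : Function.update y i false = y := by
    rw [show (false:Bool) = y i by simp [hyi]]; exact Function.update_eq_self i y
  have hne : y ≠ Function.update y i true := by
    intro hEq
    have := congrFun hEq i
    simp [hyi] at this
  have hset : (edgeSet n f j c).filter (fun x => Function.update x i false = y)
      = ({y, Function.update y i true} : Finset (Fin n → Bool)).filter
          (fun x => x ∈ edgeSet n f j c) := by
    ext x
    simp only [Finset.mem_filter, Finset.mem_insert, Finset.mem_singleton]
    constructor
    · rintro ⟨hxE, hproj⟩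
      refine ⟨?_, hxE⟩
      have hx' : Function.update y i (x i) = x := by
        rw [← hproj, Function.update_idem, Function.update_eq_self]
      cases hxi : x i
      · left; rw [← hx', hxi, hy0]
      · right; rw [← hx', hxi]
    · rintro ⟨hx, hxE⟩
      refine ⟨hxE, ?_⟩
      rcases hx with rfl | rfl
      · exact hy0
      · rw [Function.update_idem]; exact hy0
  rw [hset, card_filter_pair _ _ hne]

lemma card_edgeSet_eq_sum (n : ℕ) (f : (Fin n → Bool) → Bool) (j : Fin n) (c : Bool)
    (i : Fin n) :
    (edgeSet n f j c).card = ∑ y ∈ Finset.univ.filter (fun y : Fin n → Bool => y i = false),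
      ((if y ∈ edgeSet n f j c then 1 else 0)
        + (if Function.update y i true ∈ edgeSet n f j c then 1 else 0)) := by
  rw [Finset.card_eq_sum_card_fiberwise (f := fun x => Function.update x i false)
    (t := Finset.univ.filter (fun y : Fin n → Bool => y i = false))
    (fun x _ => by simp)]
  refine Finset.sum_congr rfl fun y hy => ?_
  simp only [Finset.mem_filter, Finset.mem_univ, true_and] at hy
  exact fiber_card n f j c i y hy

lemma card_edgeSet_sort_le (n : ℕ) (f : (Fin n → Bool) → Bool) (i : Fin n) (σ : Bool)
    (j : Fin n) (c : Bool) (hij : j ≠ i) :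
    (edgeSet n (sortF n f i σ) j c).card ≤ (edgeSet n f j c).card := by
  rw [card_edgeSet_eq_sum n (sortF n f i σ) j c i, card_edgeSet_eq_sum n f j c i]
  refine Finset.sum_le_sum fun y hy => ?_
  simp only [Finset.mem_filter, Finset.mem_univ, true_and] at hy
  exact square_ineq n f i j hij σ c y hy

lemma diffSet_triangle (n : ℕ) (f g e : (Fin n → Bool) → Bool) :
    diffSet n f e ⊆ diffSet n f g ∪ diffSet n g e := by
  intro x hx
  simp only [diffSet, Finset.mem_filter, Finset.mem_univ, true_and, Finset.mem_union] at *
  by_cases hfg : f x = g x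
  · right; rw [← hfg]; exact hx
  · left; exact hfg

/-- repeatedly sort coordinates `0, 1, ..., n-1`. -/
def seqF (n : ℕ) (h : (Fin n → Bool) → Bool) (σ : Fin n → Bool) :
    ℕ → ((Fin n → Bool) → Bool)
  | 0 => h
  | k+1 => if hk : k < n then sortF n (seqF n h σ k) ⟨k, hk⟩ (σ ⟨k, hk⟩) else seqF n h σ k

lemma seqF_edge_le (n : ℕ) (h : (Fin n → Bool) → Bool) (σ : Fin n → Bool) :
    ∀ k (j : Fin n) (c : Bool), k ≤ j.val →
      (edgeSet n (seqF n h σ k) j c).card ≤ (edgeSet n h j c).card := by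
  intro k
  induction k with
  | zero => intro j c _; exact le_refl _
  | succ k ih =>
    intro j c hkj
    show (edgeSet n (if hk : k < n then sortF n (seqF n h σ k) ⟨k, hk⟩ (σ ⟨k, hk⟩)
        else seqF n h σ k) j c).card ≤ _
    split
    · next hk =>
      have hij : j ≠ ⟨k, hk⟩ := by
        intro hEq; rw [hEq] at hkj; simp at hkj
      exact le_trans (card_edgeSet_sort_le n (seqF n h σ k) ⟨k, hk⟩ (σ ⟨k, hk⟩) j c hij)
        (ih j c (by omega))
    · exact ih j c (by omega)

lemma seqF_edge_empty (n : ℕ) (h : (Fin n → Bool) → Bool) (σ : Fin n → Bool) :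
    ∀ k (j : Fin n), j.val < k → edgeSet n (seqF n h σ k) j (!(σ j)) = ∅ := by
  intro k
  induction k with
  | zero => intro j hj; omega
  | succ k ih =>
    intro j hj
    show edgeSet n (if hk : k < n then sortF n (seqF n h σ k) ⟨k, hk⟩ (σ ⟨k, hk⟩)
        else seqF n h σ k) j (!(σ j)) = ∅
    split
    · next hk =>
      by_cases hjk : j.val < k
      · have hij : j ≠ ⟨k, hk⟩ := by intro hEq; rw [hEq] at hjk; simp at hjk
        have h1 := card_edgeSet_sort_le n (seqF n h σ k) ⟨k, hk⟩ (σ ⟨k, hk⟩) j (!(σ j)) hij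
        rw [ih j hjk] at h1
        simpa using Finset.card_eq_zero.mp (Nat.le_zero.mp (by simpa using h1))
      · have hjeq : j = ⟨k, hk⟩ := by
          apply Fin.ext; simp; omega
        subst hjeq
        exact edgeSet_sort_self n (seqF n h σ k) ⟨k, hk⟩ (σ ⟨k, hk⟩)
    · next hk => exact ih j (by omega)

lemma seqF_diff_le (n : ℕ) (h : (Fin n → Bool) → Bool) (σ : Fin n → Bool) :
    ∀ k, (diffSet n h (seqF n h σ k)).card ≤
      ∑ j ∈ Finset.univ.filter (fun j : Fin n => j.val < k),
        2 * (edgeSet n h j (!(σ j))).card := by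
  intro k
  induction k with
  | zero =>
    have : diffSet n h (seqF n h σ 0) = ∅ := by
      rw [Finset.eq_empty_iff_forall_notMem]; intro x
      simp [diffSet, seqF]
    simp [this]
  | succ k ih =>
    show (diffSet n h (if hk : k < n then sortF n (seqF n h σ k) ⟨k, hk⟩ (σ ⟨k, hk⟩)
        else seqF n h σ k)).card ≤ _
    split
    · next hk =>
      set i : Fin n := ⟨k, hk⟩ with hidef
      have htri := Finset.card_le_card
        (diffSet_triangle n h (seqF n h σ k) (sortF n (seqF n h σ k) i (σ i)))
      have hcu := Finset.card_union_le (diffSet n h (seqF n h σ k))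
        (diffSet n (seqF n h σ k) (sortF n (seqF n h σ k) i (σ i)))
      have hstep := card_diffSet_sort_le n (seqF n h σ k) i (σ i)
      have hmono := seqF_edge_le n h σ k i (!(σ i)) (le_refl _)
      have hfil : Finset.univ.filter (fun j : Fin n => j.val < k + 1)
          = insert i (Finset.univ.filter (fun j : Fin n => j.val < k)) := by
        ext j
        simp only [Finset.mem_filter, Finset.mem_univ, true_and, Finset.mem_insert]
        constructor
        · intro hj
          by_cases hjk : j.val < k
          · right; exact hjk
          · left; apply Fin.ext; simp [hidef]; omega
        · rintro (rfl | hj)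
          · simp [hidef]
          · omega
      have hnotmem : i ∉ Finset.univ.filter (fun j : Fin n => j.val < k) := by
        simp [hidef]
      rw [hfil, Finset.sum_insert hnotmem]
      omega
    · next hk =>
      have hfil : Finset.univ.filter (fun j : Fin n => j.val < k + 1)
          = Finset.univ.filter (fun j : Fin n => j.val < k) := by
        ext j
        simp only [Finset.mem_filter, Finset.mem_univ, true_and]
        have := j.isLt; omega
      rw [hfil]
      exact ih

lemma unate_of_edge_empty (n : ℕ) (g : (Fin n → Bool) → Bool) (σ : Fin n → Bool)
    (hemp : ∀ i : Fin n, edgeSet n g i (!(σ i)) = ∅) :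
    (∀ i : Fin n,
      (∀ x, g (Function.update x i false) = true → g (Function.update x i true) = true) ∨
      (∀ x, g (Function.update x i true) = true → g (Function.update x i false) = true)) := by
  intro i
  have hemp' := hemp i
  cases hσ : σ i
  · -- !σ i = true : no increasing edges, so non-increasing
    rw [hσ] at hemp'
    right
    intro x hx
    by_contra hc
    have hmem : Function.update x i false ∈ edgeSet n g i true := by
      rw [mem_edgeSet]
      refine ⟨Function.update_self i false x, ?_, ?_⟩
      · simp only [Bool.not_true]
        cases hgx : g (Function.update x i false)
        · rfl
        · exact absurd hgx hc
      · rw [Function.update_idem]; exact hx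
    rw [show (!false : Bool) = true from rfl] at hemp'
    rw [hemp'] at hmem
    exact absurd hmem (Finset.notMem_empty _)
  · rw [hσ] at hemp'
    left
    intro x hx
    by_contra hc
    have hmem : Function.update x i false ∈ edgeSet n g i false := by
      rw [mem_edgeSet]
      refine ⟨Function.update_self i false x, ?_, ?_⟩
      · simpa using hx
      · rw [Function.update_idem]
        cases hgx : g (Function.update x i true)
        · rfl
        · exact absurd hgx hc
    rw [show (!true : Bool) = false from rfl] at hemp'
    rw [hemp'] at hmem
    exact absurd hmem (Finset.notMem_empty _)

/-- direction chosen for each coordinate. -/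
def chooseDir (n : ℕ) (h : (Fin n → Bool) → Bool) (d : Fin n → Option Bool) :
    Fin n → Bool :=
  fun i => (d i).elim
    (decide ((edgeSet n h i false).card ≤ (edgeSet n h i true).card)) id


theorem main_thm (n : ℕ) (d : Fin n → Option Bool)
    (ε : ℝ) (hε : 0 < ε) (h : (Fin n → Bool) → Bool) (hh : (satSet n h).Nonempty)
    (hfar : ∀ g : (Fin n → Bool) → Bool,
      (∀ i : Fin n,
        (∀ x, g (Function.update x i false) = true → g (Function.update x i true) = true) ∨
        (∀ x, g (Function.update x i true) = true → g (Function.update x i false) = true)) →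
      ε / 2 ≤ ((symmDiff (satSet n h) (satSet n g)).card : ℝ) / ((satSet n h).card : ℝ)) :
    (ε / 32) * ((satSet n h).card : ℝ) ≤
        ∑ i : Fin n, (d i).elim (0 : ℝ) (fun b => ((edgeSet n h i (!b)).card : ℝ)) ∨
    (ε / 32) * ((satSet n h).card : ℝ) ≤
        ∑ i ∈ Finset.univ.filter (fun i : Fin n => d i = none),
          ((min (edgeSet n h i false).card (edgeSet n h i true).card : ℕ) : ℝ) := by
  by_contra hcon
  push_neg at hcon
  obtain ⟨hA, hB⟩ := hcon
  set σ : Fin n → Bool := chooseDir n h d with hσdef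
  set g : (Fin n → Bool) → Bool := seqF n h σ n with hgdef
  set S : ℝ := ((satSet n h).card : ℝ) with hSdef
  have hS : 0 < S := by
    rw [hSdef]
    exact_mod_cast Finset.card_pos.mpr hh
  -- g is unate
  have hg : ∀ i : Fin n,
      (∀ x, g (Function.update x i false) = true → g (Function.update x i true) = true) ∨
      (∀ x, g (Function.update x i true) = true → g (Function.update x i false) = true) :=
    unate_of_edge_empty n g σ (fun i => seqF_edge_empty n h σ n i i.isLt)
  have hfarg := hfar g hg
  -- bound the symmetric difference
  have hdiff : ((symmDiff (satSet n h) (satSet n g)).card : ℝ)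
      ≤ 2 * ∑ j : Fin n, ((edgeSet n h j (!(σ j))).card : ℝ) := by
    rw [symmDiff_satSet]
    have hN := seqF_diff_le n h σ n
    rw [show Finset.univ.filter (fun j : Fin n => j.val < n) = Finset.univ from by
      ext j; simp [j.isLt]] at hN
    calc ((diffSet n h g).card : ℝ)
        ≤ ((∑ j : Fin n, 2 * (edgeSet n h j (!(σ j))).card : ℕ) : ℝ) := by
          exact_mod_cast hN
      _ = 2 * ∑ j : Fin n, ((edgeSet n h j (!(σ j))).card : ℝ) := by
          push_cast [Finset.mul_sum]; ring
  -- split the sum into fixed and unfixed parts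
  have hsplit : ∑ j : Fin n, ((edgeSet n h j (!(σ j))).card : ℝ)
      = (∑ i ∈ Finset.univ.filter (fun i : Fin n => d i = none),
          ((min (edgeSet n h i false).card (edgeSet n h i true).card : ℕ) : ℝ))
        + ∑ i : Fin n, (d i).elim (0 : ℝ) (fun b => ((edgeSet n h i (!b)).card : ℝ)) := by
    rw [← Finset.sum_filter_add_sum_filter_not Finset.univ (fun i : Fin n => d i = none)
      (fun j : Fin n => ((edgeSet n h j (!(σ j))).card : ℝ))]
    congr 1
    · refine Finset.sum_congr rfl fun i hi => ?_
      simp only [Finset.mem_filter, Finset.mem_univ, true_and] at hi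
      have hσi : σ i = decide ((edgeSet n h i false).card ≤ (edgeSet n h i true).card) := by
        rw [hσdef]; unfold chooseDir; rw [hi]; rfl
      rw [hσi]
      by_cases hle : (edgeSet n h i false).card ≤ (edgeSet n h i true).card
      · rw [decide_eq_true hle]
        norm_num [min_eq_left hle]
      · have hle' : (edgeSet n h i true).card ≤ (edgeSet n h i false).card :=
          le_of_not_ge hle
        rw [decide_eq_false hle]
        norm_num [min_eq_right hle']
    · rw [← Finset.sum_filter_of_ne (s := Finset.univ)
        (p := fun i : Fin n => ¬ d i = none)
        (f := fun i : Fin n => (d i).elim (0 : ℝ) (fun b => ((edgeSet n h i (!b)).card : ℝ)))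
        (fun i _ hne => by
          intro hnone
          exact hne (by simp [hnone]))]
      refine Finset.sum_congr rfl fun i hi => ?_
      simp only [Finset.mem_filter, Finset.mem_univ, true_and] at hi
      obtain ⟨b, hb⟩ := Option.ne_none_iff_exists'.mp hi
      have hσi : σ i = b := by rw [hσdef]; unfold chooseDir; rw [hb]; rfl
      rw [hσi, hb]
      rfl
  -- contradiction
  have hchain : ε / 2 * S ≤ ((symmDiff (satSet n h) (satSet n g)).card : ℝ) :=
    (le_div_iff₀ hS).mp hfarg
  have : ε / 2 * S < 2 * ((ε / 32) * S + (ε / 32) * S) := by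
    calc ε / 2 * S ≤ ((symmDiff (satSet n h) (satSet n g)).card : ℝ) := hchain
      _ ≤ 2 * ∑ j : Fin n, ((edgeSet n h j (!(σ j))).card : ℝ) := hdiff
      _ = 2 * ((∑ i ∈ Finset.univ.filter (fun i : Fin n => d i = none),
            ((min (edgeSet n h i false).card (edgeSet n h i true).card : ℕ) : ℝ))
          + ∑ i : Fin n, (d i).elim (0 : ℝ) (fun b => ((edgeSet n h i (!b)).card : ℝ))) := by
            rw [hsplit]
      _ < 2 * ((ε / 32) * S + (ε / 32) * S) := by
            have := add_lt_add hB hA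
            linarith
  nlinarith [mul_pos hε hS]

/-- If `h` is `ε/2`-far from unate in relative distance, then for any partial
string `d̃`, either the fixed coordinates carry many violating edges, or the
unfixed coordinates do. -/
theorem far_from_unate_fixed_or_unfixed (n : ℕ) (d : Fin n → Option Bool)
    (ε : ℝ) (hε : 0 < ε) (h : (Fin n → Bool) → Bool) (hh : (satSet n h).Nonempty)
    (hfar : ∀ g : (Fin n → Bool) → Bool, Unate n g → ε / 2 ≤ reldist n h g) :
    (ε / 32) * ((satSet n h).card : ℝ) ≤
        ∑ i : Fin n, (d i).elim (0 : ℝ) (fun b => ((edgeSet n h i (!b)).card : ℝ)) ∨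
    (ε / 32) * ((satSet n h).card : ℝ) ≤
        ∑ i ∈ Finset.univ.filter (fun i : Fin n => d i = none),
          ((min (edgeSet n h i false).card (edgeSet n h i true).card : ℕ) : ℝ) := by
  exact main_thm n d ε hε h hh (fun g hg => hfar g hg)
end

section
/- Let f: {0,1}^n → {0,1}, let M ≥ 0 be a real number, let d̃ ∈ {0,1,*}^n, let i ∈ Unfixed(d̃), and let b ∈ {0,1}. Then every edge of the truncation f_{M,d̃} that is strictly b-monotone in direction i is also strictly b-monotone in f in direction i; i.e., Edge_i^b(f_{M,d̃}) ⊆ Edge_i^b(f). -/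
open Finset

lemma distPartial_update (n : ℕ) (x : Fin n → Bool) (d : Fin n → Option Bool)
    (i : Fin n) (hi : d i = none) (c : Bool) :
    distPartial n (Function.update x i c) d = distPartial n x d := by
  unfold distPartial
  congr 1
  apply Finset.filter_congr
  intro j _
  by_cases hj : j = i
  · subst hj
    simp [hi]
  · simp [Function.update_of_ne hj]

/-- On an unfixed coordinate of `d̃`, every strictly `b`-monotone edge of the
truncation `f_{M,d̃}` is also a strictly `b`-monotone edge of `f`. -/
theorem truncP_edgeSet_subset (n : ℕ) (f : (Fin n → Bool) → Bool)
    (M : ℝ) (hM : 0 ≤ M) (d : Fin n → Option Bool)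
    (i : Fin n) (hi : d i = none) (b : Bool) :
    edgeSet n (truncP n f M d) i b ⊆ edgeSet n f i b := by
  intro x hx
  simp only [edgeSet, Finset.mem_filter, Finset.mem_univ, true_and] at hx ⊢
  obtain ⟨h0, h1, h2⟩ := hx
  refine ⟨h0, ?_, ?_⟩ <;> unfold truncP at h1 h2
  · by_cases h : (distPartial n x d : ℝ) ≤ M
    · simpa [h] using h1
    · rw [if_neg h] at h1
      have hup : ¬ ((distPartial n (Function.update x i true) d : ℝ) ≤ M) := by
        rwa [distPartial_update n x d i hi true]
      rw [if_neg hup] at h2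
      cases b <;> simp at h1 h2
  · by_cases h : (distPartial n (Function.update x i true) d : ℝ) ≤ M
    · simpa [h] using h2
    · rw [if_neg h] at h2
      have hx' : ¬ ((distPartial n x d : ℝ) ≤ M) := by
        rw [← distPartial_update n x d i hi true]; exact h
      rw [if_neg hx'] at h1
      cases b <;> simp at h1 h2
end

section
/- Edge-isoperimetric inequality (Harper, Bernstein, Lindsey, Hart): For any nonempty set S ⊆ {0,1}^n, the number of ordered pairs (x, y) ∈ S × S such that x and y are neighbors in the hypercube (i.e., have Hamming distance exactly 1) is at most |S|·log₂|S|. -/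
open Finset

lemma aux_t (t : ℝ) (h0 : 0 ≤ t) (h1 : t ≤ 1) : t ≤ Real.logb 2 (1 + t) := by
  have hexp : Real.exp (t * Real.log 2) ≤ 1 + t := by
    have hc := convexOn_exp.2 (Set.mem_univ (0:ℝ)) (Set.mem_univ (Real.log 2))
      (by linarith : (0:ℝ) ≤ 1 - t) h0 (by ring)
    simp only [smul_eq_mul, mul_zero, zero_add, Real.exp_zero,
      Real.exp_log two_pos] at hc
    calc Real.exp (t * Real.log 2) ≤ (1 - t) * 1 + t * 2 := hc
      _ = 1 + t := by ring
  have hlog : t * Real.log 2 ≤ Real.log (1 + t) :=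
    (Real.le_log_iff_exp_le (by linarith)).2 hexp
  rw [Real.logb, le_div_iff₀ (Real.log_pos one_lt_two)]
  linarith

lemma aux_num (a b : ℕ) : (a:ℝ) * Real.logb 2 a + b * Real.logb 2 b + 2 * min a b
    ≤ ((a:ℝ) + b) * Real.logb 2 ((a:ℝ) + b) := by
  wlog hba : b ≤ a generalizing a b
  · have := this b a (le_of_not_ge hba)
    rw [min_comm, add_comm (b:ℝ) a] at this; linarith
  rcases Nat.eq_zero_or_pos b with hb | hb
  · subst hb; simp
  have hb1 : (1:ℝ) ≤ b := by exact_mod_cast hb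
  have ha1 : (1:ℝ) ≤ a := le_trans hb1 (by exact_mod_cast hba)
  have hbpos : (0:ℝ) < b := by linarith
  have hapos : (0:ℝ) < a := by linarith
  have hmin : (min a b : ℕ) = b := min_eq_right hba
  rw [hmin]
  -- step 1 : a * logb (a+b) ≥ a * logb a + b
  have hdiv : Real.logb 2 (((a:ℝ)+b)/a) = Real.logb 2 ((a:ℝ)+b) - Real.logb 2 a :=
    Real.logb_div (by positivity) (by positivity)
  have ht : (b:ℝ)/a ≤ Real.logb 2 (1 + (b:ℝ)/a) := by
    apply aux_t
    · positivity
    · rw [div_le_one hapos]; exact_mod_cast hba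
  have h1 : (1:ℝ) + (b:ℝ)/a = ((a:ℝ)+b)/a := by field_simp
  rw [h1, hdiv] at ht
  have step1 : (a:ℝ) * Real.logb 2 a + b ≤ a * Real.logb 2 ((a:ℝ)+b) := by
    have := mul_le_mul_of_nonneg_left ht (le_of_lt hapos)
    rw [mul_sub] at this
    have hba' : (a:ℝ) * ((b:ℝ)/a) = b := by field_simp
    rw [hba'] at this
    linarith
  -- step 2 : b * logb (a+b) ≥ b * logb b + b
  have h2b : Real.logb 2 (2*(b:ℝ)) = 1 + Real.logb 2 b := by
    rw [Real.logb_mul two_ne_zero (by positivity), Real.logb_self_eq_one] <;> norm_num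
  have hmono : Real.logb 2 (2*(b:ℝ)) ≤ Real.logb 2 ((a:ℝ)+b) := by
    apply Real.logb_le_logb_of_le one_lt_two (by positivity)
    have : (b:ℝ) ≤ a := by exact_mod_cast hba
    linarith
  rw [h2b] at hmono
  have step2 : (b:ℝ) * Real.logb 2 b + b ≤ b * Real.logb 2 ((a:ℝ)+b) := by
    have := mul_le_mul_of_nonneg_left hmono (le_of_lt hbpos)
    rw [mul_add, mul_one] at this
    linarith
  have : ((a:ℝ)+b) * Real.logb 2 ((a:ℝ)+b)
      = a * Real.logb 2 ((a:ℝ)+b) + b * Real.logb 2 ((a:ℝ)+b) := by ring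
  push_cast
  linarith
open Finset

lemma dist_one_flip {n : ℕ} {x y : Fin n → Bool} {i : Fin n}
    (h : hammingDist x y = 1) (hi : x i ≠ y i) :
    y = Function.update x i (!(x i)) := by
  obtain ⟨a, ha⟩ := Finset.card_eq_one.mp h
  have hia : i ∈ ({j | x j ≠ y j} : Finset (Fin n)) := by
    simp [hi]
  rw [ha, Finset.mem_singleton] at hia
  funext j
  by_cases hj : j = i
  · subst hj
    rw [Function.update_self]
    revert hi; cases x j <;> cases y j <;> simp
  · rw [Function.update_of_ne hj]
    by_contra hne
    have hja : j ∈ ({k | x k ≠ y k} : Finset (Fin n)) := by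
      simp only [Finset.mem_filter, Finset.mem_univ, true_and]
      exact fun h => hne h.symm
    rw [ha, Finset.mem_singleton] at hja
    exact hj (hja.trans hia.symm)

lemma edge_aux (n : ℕ) (S : Finset (Fin n → Bool)) :
    (((S ×ˢ S).filter (fun p : (Fin n → Bool) × (Fin n → Bool) =>
        hammingDist p.1 p.2 = 1)).card : ℝ)
      ≤ (S.card : ℝ) * Real.logb 2 (S.card : ℝ) := by
  induction S using Finset.strongInduction with
  | _ S ih =>
  by_cases hcard : S.card ≤ 1
  · have hempty : (S ×ˢ S).filter (fun p : (Fin n → Bool) × (Fin n → Bool) =>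
        hammingDist p.1 p.2 = 1) = ∅ := by
      rw [Finset.filter_eq_empty_iff]
      rintro ⟨x, y⟩ hxy
      rw [Finset.mem_product] at hxy
      have hxy' : x = y := Finset.card_le_one.mp hcard _ hxy.1 _ hxy.2
      simp [hxy']
    rw [hempty]
    rcases Nat.le_one_iff_eq_zero_or_eq_one.mp hcard with h | h <;> rw [h] <;> simp
  push_neg at hcard
  obtain ⟨x, hx, y, hy, hxy⟩ := Finset.one_lt_card.mp hcard
  obtain ⟨i, hi⟩ := Function.ne_iff.mp hxy
  set S0 := S.filter (fun z => z i = false) with hS0def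
  set S1 := S.filter (fun z => z i = true) with hS1def
  have hS0ne : S0.Nonempty := by
    rcases Bool.eq_false_or_eq_true (x i) with h | h
    · refine ⟨y, Finset.mem_filter.mpr ⟨hy, ?_⟩⟩
      revert hi; rw [h]; cases y i <;> simp
    · exact ⟨x, Finset.mem_filter.mpr ⟨hx, h⟩⟩
  have hS1ne : S1.Nonempty := by
    rcases Bool.eq_false_or_eq_true (x i) with h | h
    · exact ⟨x, Finset.mem_filter.mpr ⟨hx, h⟩⟩
    · refine ⟨y, Finset.mem_filter.mpr ⟨hy, ?_⟩⟩
      revert hi; rw [h]; cases y i <;> simp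
  have hsum : S0.card + S1.card = S.card := by
    rw [hS0def, hS1def]
    have h1 : S.filter (fun z => z i = true)
        = S.filter (fun z => ¬ z i = false) := by
      apply Finset.filter_congr; intro z _; simp
    rw [h1]
    exact Finset.card_filter_add_card_filter_not _
  have hss0 : S0 ⊂ S := by
    obtain ⟨z, hz⟩ := hS1ne
    rw [Finset.ssubset_iff_of_subset (Finset.filter_subset _ _)]
    refine ⟨z, (Finset.mem_filter.mp hz).1, fun hzin => ?_⟩
    have h1 := (Finset.mem_filter.mp hzin).2
    have h2 := (Finset.mem_filter.mp hz).2
    rw [h2] at h1; exact Bool.noConfusion h1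
  have hss1 : S1 ⊂ S := by
    obtain ⟨z, hz⟩ := hS0ne
    rw [Finset.ssubset_iff_of_subset (Finset.filter_subset _ _)]
    refine ⟨z, (Finset.mem_filter.mp hz).1, fun hzin => ?_⟩
    have h1 := (Finset.mem_filter.mp hzin).2
    have h2 := (Finset.mem_filter.mp hz).2
    rw [h2] at h1; exact Bool.noConfusion h1
  set P := (S ×ˢ S).filter (fun p : (Fin n → Bool) × (Fin n → Bool) =>
    hammingDist p.1 p.2 = 1) with hPdef
  set E0 := (S0 ×ˢ S0).filter (fun p : (Fin n → Bool) × (Fin n → Bool) =>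
    hammingDist p.1 p.2 = 1) with hE0def
  set E1 := (S1 ×ˢ S1).filter (fun p : (Fin n → Bool) × (Fin n → Bool) =>
    hammingDist p.1 p.2 = 1) with hE1def
  set Q := P.filter (fun p => p.1 i = p.2 i) with hQdef
  set R := P.filter (fun p => ¬ p.1 i = p.2 i) with hRdef
  have split1 : P.card = Q.card + R.card :=
    (Finset.card_filter_add_card_filter_not _).symm
  have split2 : Q.card = (Q.filter (fun p => p.1 i = false)).card
      + (Q.filter (fun p => ¬ p.1 i = false)).card :=
    (Finset.card_filter_add_card_filter_not _).symm
  have split3 : R.card = (R.filter (fun p => p.1 i = false)).card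
      + (R.filter (fun p => ¬ p.1 i = false)).card :=
    (Finset.card_filter_add_card_filter_not _).symm
  -- Q pieces inside E0, E1
  have hsub0 : Q.filter (fun p => p.1 i = false) ⊆ E0 := by
    intro p hp
    simp only [hQdef, hPdef, hE0def, hS0def, Finset.mem_filter,
      Finset.mem_product] at hp ⊢
    obtain ⟨⟨⟨⟨h1, h2⟩, h3⟩, h4⟩, h5⟩ := hp
    exact ⟨⟨⟨h1, h5⟩, ⟨h2, h4 ▸ h5⟩⟩, h3⟩
  have hsub1 : Q.filter (fun p => ¬ p.1 i = false) ⊆ E1 := by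
    intro p hp
    simp only [hQdef, hPdef, hE1def, hS1def, Finset.mem_filter,
      Finset.mem_product] at hp ⊢
    obtain ⟨⟨⟨⟨h1, h2⟩, h3⟩, h4⟩, h5⟩ := hp
    rw [Bool.not_eq_false] at h5
    exact ⟨⟨⟨h1, h5⟩, ⟨h2, h4 ▸ h5⟩⟩, h3⟩
  -- R pieces bounded by min
  have hR0a : (R.filter (fun p => p.1 i = false)).card ≤ S0.card := by
    apply Finset.card_le_card_of_injOn Prod.fst
    · intro p hp
      simp only [hRdef, hPdef, hS0def, Finset.mem_coe, Finset.mem_filter,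
        Finset.mem_product] at hp ⊢
      exact ⟨hp.1.1.1.1, hp.2⟩
    · intro p hp q hq hpq
      simp only [hRdef, hPdef, Finset.mem_coe, Finset.mem_filter] at hp hq
      have hp2 := dist_one_flip hp.1.1.2 hp.1.2
      have hq2 := dist_one_flip hq.1.1.2 hq.1.2
      exact Prod.ext hpq (by rw [hp2, hq2, hpq])
  have hR0b : (R.filter (fun p => p.1 i = false)).card ≤ S1.card := by
    apply Finset.card_le_card_of_injOn Prod.snd
    · intro p hp
      simp only [hRdef, hPdef, hS1def, Finset.mem_coe, Finset.mem_filter,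
        Finset.mem_product] at hp ⊢
      refine ⟨hp.1.1.1.2, ?_⟩
      have := hp.1.2
      rw [hp.2] at this
      revert this; cases p.2 i <;> simp
    · intro p hp q hq hpq
      simp only [hRdef, hPdef, Finset.mem_coe, Finset.mem_filter] at hp hq
      have hdp : hammingDist p.2 p.1 = 1 := by rw [hammingDist_comm]; exact hp.1.1.2
      have hdq : hammingDist q.2 q.1 = 1 := by rw [hammingDist_comm]; exact hq.1.1.2
      have hp2 := dist_one_flip hdp (fun h => hp.1.2 h.symm)
      have hq2 := dist_one_flip hdq (fun h => hq.1.2 h.symm)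
      exact Prod.ext (by rw [hp2, hq2, hpq]) hpq
  have hR1a : (R.filter (fun p => ¬ p.1 i = false)).card ≤ S1.card := by
    apply Finset.card_le_card_of_injOn Prod.fst
    · intro p hp
      simp only [hRdef, hPdef, hS1def, Finset.mem_coe, Finset.mem_filter,
        Finset.mem_product] at hp ⊢
      exact ⟨hp.1.1.1.1, Bool.not_eq_false _ ▸ hp.2⟩
    · intro p hp q hq hpq
      simp only [hRdef, hPdef, Finset.mem_coe, Finset.mem_filter] at hp hq
      have hp2 := dist_one_flip hp.1.1.2 hp.1.2
      have hq2 := dist_one_flip hq.1.1.2 hq.1.2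
      exact Prod.ext hpq (by rw [hp2, hq2, hpq])
  have hR1b : (R.filter (fun p => ¬ p.1 i = false)).card ≤ S0.card := by
    apply Finset.card_le_card_of_injOn Prod.snd
    · intro p hp
      simp only [hRdef, hPdef, hS0def, Finset.mem_coe, Finset.mem_filter,
        Finset.mem_product] at hp ⊢
      refine ⟨hp.1.1.1.2, ?_⟩
      have h5 := hp.2
      rw [Bool.not_eq_false] at h5
      have := hp.1.2
      rw [h5] at this
      revert this; cases p.2 i <;> simp
    · intro p hp q hq hpq
      simp only [hRdef, hPdef, Finset.mem_coe, Finset.mem_filter] at hp hq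
      have hdp : hammingDist p.2 p.1 = 1 := by rw [hammingDist_comm]; exact hp.1.1.2
      have hdq : hammingDist q.2 q.1 = 1 := by rw [hammingDist_comm]; exact hq.1.1.2
      have hp2 := dist_one_flip hdp (fun h => hp.1.2 h.symm)
      have hq2 := dist_one_flip hdq (fun h => hq.1.2 h.symm)
      exact Prod.ext (by rw [hp2, hq2, hpq]) hpq
  have hkey : P.card ≤ E0.card + E1.card + 2 * min S0.card S1.card := by
    have c0 := Finset.card_le_card hsub0
    have c1 := Finset.card_le_card hsub1
    have m0 : (R.filter (fun p => p.1 i = false)).card ≤ min S0.card S1.card :=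
      le_min hR0a hR0b
    have m1 : (R.filter (fun p => ¬ p.1 i = false)).card ≤ min S0.card S1.card :=
      le_min hR1b hR1a
    omega
  have ih0 := ih S0 hss0
  have ih1 := ih S1 hss1
  have hnum := aux_num S0.card S1.card
  have hcast : ((S0.card : ℝ) + S1.card) = (S.card : ℝ) := by
    exact_mod_cast congrArg (Nat.cast (R := ℝ)) hsum
  calc (P.card : ℝ) ≤ (E0.card : ℝ) + E1.card + 2 * (min S0.card S1.card : ℕ) := by
        exact_mod_cast hkey
    _ ≤ (S0.card : ℝ) * Real.logb 2 S0.card + (S1.card : ℝ) * Real.logb 2 S1.card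
        + 2 * (min S0.card S1.card : ℕ) := by linarith
    _ ≤ ((S0.card : ℝ) + S1.card) * Real.logb 2 ((S0.card : ℝ) + S1.card) := hnum
    _ = (S.card : ℝ) * Real.logb 2 (S.card : ℝ) := by rw [hcast]

/-- Edge-isoperimetric inequality (Harper, Bernstein, Lindsey, Hart): a nonempty
set `S ⊆ {0,1}^n` spans at most `|S|·log₂|S|` ordered pairs of hypercube
neighbors. -/
theorem edge_isoperimetric (n : ℕ) (S : Finset (Fin n → Bool)) (hS : S.Nonempty) :
    (((S ×ˢ S).filter (fun p : (Fin n → Bool) × (Fin n → Bool) =>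
        hammingDist p.1 p.2 = 1)).card : ℝ)
      ≤ (S.card : ℝ) * Real.logb 2 (S.card : ℝ) := by
  exact edge_aux n S
end

section
/- Let f: {0,1}^n → {0,1} with N := |f^{-1}(1)| ≥ 1, and for each i ∈ [n] let F_i denote the set of points x ∈ {0,1}^n with f(x) = f(x ⊕ e_i) = 1. Suppose I ⊆ [n] satisfies |I| > 100·log₂(N). Then when i is drawn uniformly at random from I, the event |F_i| ≤ N/20 holds with probability at least 1/2; equivalently, the number of i ∈ I with |F_i| ≤ N/20 is at least |I|/2. -/
open Finset

private lemma flip_apply_self (n : ℕ) (x : Fin n → Bool) (i : Fin n) :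
    flipBit n x i i = !(x i) := by
  simp [flipBit]

private lemma flip_apply_ne (n : ℕ) (x : Fin n → Bool) (i j : Fin n) (h : j ≠ i) :
    flipBit n x i j = x j := by
  simp [flipBit, Function.update_of_ne h]

private lemma flipBit_flip_flip (n : ℕ) (x : Fin n → Bool) (i : Fin n) :
    flipBit n (flipBit n x i) i = x := by
  funext j
  by_cases h : j = i
  · subst h; simp [flipBit]
  · simp [flipBit, Function.update_of_ne h]

private lemma aux2 (a b : ℝ) (ha : 1 ≤ a) (hb : 1 ≤ b) (hab : a ≤ b) :
    a * Real.logb 2 a + b * Real.logb 2 b + a ≤ (a + b) * Real.logb 2 (a + b) := by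
  have h1 : (1 : ℝ) + Real.logb 2 a = Real.logb 2 (2 * a) := by
    rw [Real.logb_mul (by norm_num) (by linarith), Real.logb_self_eq_one (by norm_num)]
  have h2 : Real.logb 2 (2 * a) ≤ Real.logb 2 (a + b) :=
    Real.logb_le_logb_of_le (by norm_num) (by linarith) (by linarith)
  have h3 : Real.logb 2 b ≤ Real.logb 2 (a + b) :=
    Real.logb_le_logb_of_le (by norm_num) (by linarith) (by linarith)
  have hA : a * (1 + Real.logb 2 a) ≤ a * Real.logb 2 (a + b) := by
    rw [h1]; exact mul_le_mul_of_nonneg_left h2 (by linarith)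
  have hB : b * Real.logb 2 b ≤ b * Real.logb 2 (a + b) :=
    mul_le_mul_of_nonneg_left h3 (by linarith)
  nlinarith [hA, hB]

private lemma auxmin (a b : ℝ) (ha : 1 ≤ a) (hb : 1 ≤ b) :
    a * Real.logb 2 a + b * Real.logb 2 b + min a b
      ≤ (a + b) * Real.logb 2 (a + b) := by
  rcases le_total a b with h | h
  · rw [min_eq_left h]; exact aux2 a b ha hb h
  · rw [min_eq_right h]
    have := aux2 b a hb ha h
    linarith [this, (by ring_nf : (b + a) * Real.logb 2 (b + a) = (a + b) * Real.logb 2 (a + b))]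

/-- Edge-isoperimetric bound: the number of ordered pairs of adjacent points
inside `S` is at most `2 |S| log₂ |S|`. -/
private lemma sum_flip_le (n : ℕ) (S : Finset (Fin n → Bool)) :
    ((∑ i : Fin n, (S.filter (fun x => flipBit n x i ∈ S)).card : ℕ) : ℝ)
      ≤ 2 * S.card * Real.logb 2 S.card := by
  induction S using Finset.strongInduction with
  | _ S ih =>
    by_cases hcard : 1 < S.card
    · -- find a splitting coordinate
      obtain ⟨x, hx, y, hy, hxy⟩ := Finset.one_lt_card.mp hcard
      obtain ⟨j, hj⟩ := Function.ne_iff.mp hxy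
      set S0 := S.filter (fun z => z j = true) with hS0
      set S1 := S.filter (fun z => ¬ (z j = true)) with hS1
      have hcards : S0.card + S1.card = S.card :=
        Finset.card_filter_add_card_filter_not _
      have hS0ne : S0.Nonempty := by
        rcases Bool.eq_false_or_eq_true (x j) with h | h
        · exact ⟨x, Finset.mem_filter.mpr ⟨hx, h⟩⟩
        · rcases Bool.eq_false_or_eq_true (y j) with h' | h'
          · exact ⟨y, Finset.mem_filter.mpr ⟨hy, h'⟩⟩
          · exact absurd (h.trans h'.symm) hj
      have hS1ne : S1.Nonempty := by
        rcases Bool.eq_false_or_eq_true (x j) with h | h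
        · rcases Bool.eq_false_or_eq_true (y j) with h' | h'
          · exact absurd (h.trans h'.symm) hj
          · exact ⟨y, Finset.mem_filter.mpr ⟨hy, by simp [h']⟩⟩
        · exact ⟨x, Finset.mem_filter.mpr ⟨hx, by simp [h]⟩⟩
      have hss0 : S0 ⊂ S := by
        rw [hS0, Finset.filter_ssubset]
        obtain ⟨z, hz⟩ := hS1ne
        rw [hS1, Finset.mem_filter] at hz
        exact ⟨z, hz.1, hz.2⟩
      have hss1 : S1 ⊂ S := by
        rw [hS1, Finset.filter_ssubset]
        obtain ⟨z, hz⟩ := hS0ne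
        rw [hS0, Finset.mem_filter] at hz
        exact ⟨z, hz.1, by simp [hz.2]⟩
      -- split each filter
      have hUnion : S0 ∪ S1 = S := Finset.filter_union_filter_not_eq _ S
      have hdisj : Disjoint S0 S1 := Finset.disjoint_filter_filter_not S S _
      have key : ∀ i : Fin n, (S.filter (fun x => flipBit n x i ∈ S)).card
          = (S0.filter (fun x => flipBit n x i ∈ S)).card
            + (S1.filter (fun x => flipBit n x i ∈ S)).card := by
        intro i
        have hsplit : S.filter (fun x => flipBit n x i ∈ S)
            = S0.filter (fun x => flipBit n x i ∈ S)
              ∪ S1.filter (fun x => flipBit n x i ∈ S) := by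
          rw [← Finset.filter_union, hUnion]
        rw [hsplit, Finset.card_union_of_disjoint
          (hdisj.mono (Finset.filter_subset _ _) (Finset.filter_subset _ _))]
      -- for i ≠ j restrict to the halves
      have key0 : ∀ i : Fin n, i ≠ j →
          (S0.filter (fun x => flipBit n x i ∈ S)) = (S0.filter (fun x => flipBit n x i ∈ S0)) := by
        intro i hij
        apply Finset.filter_congr
        intro z hz
        rw [hS0, Finset.mem_filter] at hz
        have hzj : flipBit n z i j = z j := flip_apply_ne n z i j (Ne.symm hij)
        simp [hS0, Finset.mem_filter, hzj, hz.2]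
      have key1 : ∀ i : Fin n, i ≠ j →
          (S1.filter (fun x => flipBit n x i ∈ S)) = (S1.filter (fun x => flipBit n x i ∈ S1)) := by
        intro i hij
        apply Finset.filter_congr
        intro z hz
        rw [hS1, Finset.mem_filter] at hz
        have hzj : flipBit n z i j = z j := flip_apply_ne n z i j (Ne.symm hij)
        simp [hS1, Finset.mem_filter, hzj, hz.2]
      -- at j the halves have no internal pairs
      have key0j : (S0.filter (fun x => flipBit n x j ∈ S0)) = ∅ := by
        apply Finset.filter_false_of_mem
        intro z hz
        rw [hS0, Finset.mem_filter] at hz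
        intro hmem
        rw [hS0, Finset.mem_filter] at hmem
        rw [flip_apply_self, hz.2] at hmem
        simp at hmem
      have key1j : (S1.filter (fun x => flipBit n x j ∈ S1)) = ∅ := by
        apply Finset.filter_false_of_mem
        intro z hz
        rw [hS1, Finset.mem_filter] at hz
        intro hmem
        rw [hS1, Finset.mem_filter, flip_apply_self] at hmem
        have hzj : z j = false := by
          cases hb : z j
          · rfl
          · exact absurd hb hz.2
        rw [hzj] at hmem
        simp at hmem
      -- cross bounds at coordinate j
      have cross0a : (S0.filter (fun x => flipBit n x j ∈ S)).card ≤ S0.card :=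
        Finset.card_le_card (Finset.filter_subset _ _)
      have cross0b : (S0.filter (fun x => flipBit n x j ∈ S)).card ≤ S1.card := by
        apply Finset.card_le_card_of_injOn (fun z => flipBit n z j)
        · intro z hz
          simp only [Finset.mem_coe] at hz ⊢
          rw [Finset.mem_filter] at hz
          have hz0 := Finset.mem_filter.mp hz.1
          rw [hS1, Finset.mem_filter]
          refine ⟨hz.2, ?_⟩
          rw [flip_apply_self, hz0.2]
          simp
        · intro a _ b _ hab
          have := congrArg (fun z => flipBit n z j) hab
          simpa [flipBit_flip_flip] using this
      have cross1a : (S1.filter (fun x => flipBit n x j ∈ S)).card ≤ S1.card :=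
        Finset.card_le_card (Finset.filter_subset _ _)
      have cross1b : (S1.filter (fun x => flipBit n x j ∈ S)).card ≤ S0.card := by
        apply Finset.card_le_card_of_injOn (fun z => flipBit n z j)
        · intro z hz
          simp only [Finset.mem_coe] at hz ⊢
          rw [Finset.mem_filter] at hz
          have hz1 := Finset.mem_filter.mp hz.1
          rw [hS0, Finset.mem_filter]
          refine ⟨hz.2, ?_⟩
          have hzj : z j = false := by
            cases hb : z j
            · rfl
            · exact absurd hb hz1.2
          rw [flip_apply_self, hzj]
          rfl
        · intro a _ b _ hab
          have := congrArg (fun z => flipBit n z j) hab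
          simpa [flipBit_flip_flip] using this
      -- assemble sums in ℕ
      have hsum : (∑ i : Fin n, (S.filter (fun x => flipBit n x i ∈ S)).card)
          ≤ (∑ i : Fin n, (S0.filter (fun x => flipBit n x i ∈ S0)).card)
            + (∑ i : Fin n, (S1.filter (fun x => flipBit n x i ∈ S1)).card)
            + ((S0.filter (fun x => flipBit n x j ∈ S)).card
              + (S1.filter (fun x => flipBit n x j ∈ S)).card) := by
        have step : ∀ i : Fin n, (S.filter (fun x => flipBit n x i ∈ S)).card
            ≤ (S0.filter (fun x => flipBit n x i ∈ S0)).card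
              + (S1.filter (fun x => flipBit n x i ∈ S1)).card
              + (if i = j then ((S0.filter (fun x => flipBit n x j ∈ S)).card
                  + (S1.filter (fun x => flipBit n x j ∈ S)).card) else 0) := by
          intro i
          rw [key i]
          by_cases hij : i = j
          · subst hij
            rw [if_pos rfl]
            exact Nat.le_add_left _ _
          · rw [key0 i hij, key1 i hij, if_neg hij]
            simp
        calc (∑ i : Fin n, (S.filter (fun x => flipBit n x i ∈ S)).card)
            ≤ ∑ i : Fin n, ((S0.filter (fun x => flipBit n x i ∈ S0)).card
              + (S1.filter (fun x => flipBit n x i ∈ S1)).card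
              + (if i = j then ((S0.filter (fun x => flipBit n x j ∈ S)).card
                  + (S1.filter (fun x => flipBit n x j ∈ S)).card) else 0)) :=
              Finset.sum_le_sum (fun i _ => step i)
          _ = _ := by
              rw [Finset.sum_add_distrib, Finset.sum_add_distrib,
                Finset.sum_ite_eq' Finset.univ j]
              simp
      have ih0 := ih S0 hss0
      have ih1 := ih S1 hss1
      have h0pos : 1 ≤ (S0.card : ℝ) := by
        exact_mod_cast Nat.one_le_iff_ne_zero.mpr (Finset.card_ne_zero_of_mem hS0ne.choose_spec)
      have h1pos : 1 ≤ (S1.card : ℝ) := by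
        exact_mod_cast Nat.one_le_iff_ne_zero.mpr (Finset.card_ne_zero_of_mem hS1ne.choose_spec)
      have hcross : ((S0.filter (fun x => flipBit n x j ∈ S)).card
              + (S1.filter (fun x => flipBit n x j ∈ S)).card : ℝ)
          ≤ 2 * min (S0.card : ℝ) (S1.card : ℝ) := by
        rcases le_total (S0.card : ℝ) (S1.card : ℝ) with h | h
        · rw [min_eq_left h]
          have c0 : ((S0.filter (fun x => flipBit n x j ∈ S)).card : ℝ) ≤ S0.card := by
            exact_mod_cast cross0a
          have c1 : ((S1.filter (fun x => flipBit n x j ∈ S)).card : ℝ) ≤ S0.card := by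
            exact_mod_cast cross1b
          linarith
        · rw [min_eq_right h]
          have c0 : ((S0.filter (fun x => flipBit n x j ∈ S)).card : ℝ) ≤ S1.card := by
            exact_mod_cast cross0b
          have c1 : ((S1.filter (fun x => flipBit n x j ∈ S)).card : ℝ) ≤ S1.card := by
            exact_mod_cast cross1a
          linarith
      have final := auxmin (S0.card : ℝ) (S1.card : ℝ) h0pos h1pos
      have hcardR : (S.card : ℝ) = (S0.card : ℝ) + (S1.card : ℝ) := by
        exact_mod_cast hcards.symm
      calc ((∑ i : Fin n, (S.filter (fun x => flipBit n x i ∈ S)).card : ℕ) : ℝ)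
          ≤ ((∑ i : Fin n, (S0.filter (fun x => flipBit n x i ∈ S0)).card : ℕ) : ℝ)
            + ((∑ i : Fin n, (S1.filter (fun x => flipBit n x i ∈ S1)).card : ℕ) : ℝ)
            + (((S0.filter (fun x => flipBit n x j ∈ S)).card : ℝ)
              + ((S1.filter (fun x => flipBit n x j ∈ S)).card : ℝ)) := by
            exact_mod_cast hsum
        _ ≤ 2 * S0.card * Real.logb 2 S0.card + 2 * S1.card * Real.logb 2 S1.card
              + 2 * min (S0.card : ℝ) (S1.card : ℝ) := by linarith
        _ ≤ 2 * ((S0.card : ℝ) + S1.card) * Real.logb 2 ((S0.card : ℝ) + S1.card) := by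
            nlinarith [final]
        _ = 2 * S.card * Real.logb 2 S.card := by rw [hcardR]
    · -- small case: S.card ≤ 1
      push_neg at hcard
      have hempty : ∀ i : Fin n, (S.filter (fun x => flipBit n x i ∈ S)) = ∅ := by
        intro i
        apply Finset.filter_false_of_mem
        intro z hz hmem
        have heq : z = flipBit n z i := Finset.card_le_one.mp hcard z hz _ hmem
        have hz2 := congrFun heq i
        rw [flip_apply_self] at hz2
        simp at hz2
      have : (∑ i : Fin n, (S.filter (fun x => flipBit n x i ∈ S)).card) = 0 := by
        apply Finset.sum_eq_zero
        intro i _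
        rw [hempty i, Finset.card_empty]
      rw [this]
      push_cast
      interval_cases h : S.card
      · simp
      · simp

/-- If `|I| > 100·log₂ N` then at least half the coordinates `i ∈ I` satisfy
`|F_i| ≤ N/20`, where `F_i` is the set of points `x` with
`f(x) = f(x ⊕ e_i) = 1`. -/
theorem half_coordinates_few_monochromatic (n : ℕ) (f : (Fin n → Bool) → Bool)
    (hN : 1 ≤ (satSet n f).card) (I : Finset (Fin n))
    (hI : 100 * Real.logb 2 ((satSet n f).card : ℝ) < (I.card : ℝ)) :
    (I.card : ℝ) / 2 ≤
      ((I.filter (fun i =>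
          ((Finset.univ.filter (fun x : Fin n → Bool =>
              f x = true ∧ f (flipBit n x i) = true)).card : ℝ)
            ≤ ((satSet n f).card : ℝ) / 20)).card : ℝ) := by
  classical
  set S := satSet n f with hS
  set N : ℝ := ((satSet n f).card : ℝ) with hNdef
  have hNpos : (1 : ℝ) ≤ N := by rw [hNdef]; exact_mod_cast hN
  have hlogpos : 0 ≤ Real.logb 2 N := Real.logb_nonneg one_lt_two hNpos
  have hF : ∀ i : Fin n,
      (Finset.univ.filter (fun x : Fin n → Bool =>
        f x = true ∧ f (flipBit n x i) = true))
        = S.filter (fun x => flipBit n x i ∈ S) := by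
    intro i
    ext z
    simp [hS, satSet, and_assoc]
  set pred : Fin n → Prop := fun i =>
    ((Finset.univ.filter (fun x : Fin n → Bool =>
        f x = true ∧ f (flipBit n x i) = true)).card : ℝ) ≤ N / 20 with hpred
  have hsplit : (I.filter pred).card + (I.filter (fun i => ¬ pred i)).card = I.card :=
    Finset.card_filter_add_card_filter_not _
  set B := I.filter (fun i => ¬ pred i) with hB
  -- lower bound the sum over B
  have hlow : (B.card : ℝ) * (N / 20) ≤
      ∑ i ∈ B, ((Finset.univ.filter (fun x : Fin n → Bool =>
        f x = true ∧ f (flipBit n x i) = true)).card : ℝ) := by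
    have := Finset.card_nsmul_le_sum B
      (fun i => ((Finset.univ.filter (fun x : Fin n → Bool =>
        f x = true ∧ f (flipBit n x i) = true)).card : ℝ)) (N / 20) ?_
    · simpa [nsmul_eq_mul] using this
    · intro i hi
      rw [hB, Finset.mem_filter] at hi
      exact le_of_not_ge hi.2
  have hup : (∑ i ∈ B, ((Finset.univ.filter (fun x : Fin n → Bool =>
        f x = true ∧ f (flipBit n x i) = true)).card : ℝ))
      ≤ 2 * N * Real.logb 2 N := by
    calc (∑ i ∈ B, ((Finset.univ.filter (fun x : Fin n → Bool =>
            f x = true ∧ f (flipBit n x i) = true)).card : ℝ))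
        ≤ ∑ i : Fin n, ((Finset.univ.filter (fun x : Fin n → Bool =>
            f x = true ∧ f (flipBit n x i) = true)).card : ℝ) :=
          Finset.sum_le_sum_of_subset_of_nonneg (Finset.subset_univ B)
            (fun i _ _ => by positivity)
      _ = ((∑ i : Fin n, (S.filter (fun x => flipBit n x i ∈ S)).card : ℕ) : ℝ) := by
          push_cast
          exact Finset.sum_congr rfl (fun i _ => by rw [hF i])
      _ ≤ 2 * S.card * Real.logb 2 S.card := sum_flip_le n S
      _ = 2 * N * Real.logb 2 N := by rw [hNdef, hS]
  have hBcard : (B.card : ℝ) ≤ 40 * Real.logb 2 N := by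
    have h1 : (B.card : ℝ) * (N / 20) ≤ 2 * N * Real.logb 2 N := le_trans hlow hup
    nlinarith [hNpos, h1, hlogpos]
  have hGB : ((I.filter pred).card : ℝ) = (I.card : ℝ) - (B.card : ℝ) := by
    rw [← hsplit]
    push_cast
    ring
  rw [hGB]
  have : (B.card : ℝ) < (I.card : ℝ) / 2 := by
    have h2 : 40 * Real.logb 2 N < (40 : ℝ) / 100 * (I.card : ℝ) := by linarith
    have h3 : (40 : ℝ) / 100 * (I.card : ℝ) ≤ (I.card : ℝ) / 2 := by
      have : (0 : ℝ) ≤ (I.card : ℝ) := Nat.cast_nonneg _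
      linarith
    linarith
  linarith
end

section
/- Let f: {0,1}^n → {0,1} with N := |f^{-1}(1)| ≥ 1, and let a, z ∈ {0,1}^n satisfy Δ(a, z) > 2N. Then the number of coordinates i ∈ a Δ z (coordinates where a and z differ) such that f(a ⊕ e_i) = 0 and f(z ⊕ e_i) = 0 is at least Δ(a, z)/2; in particular, for a uniform random i ∼ a Δ z, Pr[f(a^{(i)}) = f(z^{(i)}) = 0] ≥ 1/2. -/
open Finset

/-- If `Δ(a,z) > 2N`, then for at least half of the coordinates `i` where `a`
and `z` differ, both `f(a^{(i)}) = 0` and `f(z^{(i)}) = 0`. -/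
theorem checkSamples_many_double_zeros (n : ℕ) (f : (Fin n → Bool) → Bool)
    (hN : 1 ≤ (satSet n f).card) (a z : Fin n → Bool)
    (hfar : 2 * ((satSet n f).card : ℝ) < (hammingDist a z : ℝ)) :
    (hammingDist a z : ℝ) / 2 ≤
      ((Finset.univ.filter (fun i : Fin n =>
          a i ≠ z i ∧ f (flipBit n a i) = false ∧ f (flipBit n z i) = false)).card : ℝ) := by
  classical
  set N := (satSet n f).card with hNdef
  set D : Finset (Fin n) := Finset.univ.filter (fun i => a i ≠ z i) with hD
  set G : Finset (Fin n) := Finset.univ.filter (fun i : Fin n =>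
      a i ≠ z i ∧ f (flipBit n a i) = false ∧ f (flipBit n z i) = false) with hG
  set Ba : Finset (Fin n) := Finset.univ.filter (fun i => a i ≠ z i ∧ f (flipBit n a i) = true)
    with hBa
  set Bz : Finset (Fin n) := Finset.univ.filter (fun i => a i ≠ z i ∧ f (flipBit n z i) = true)
    with hBz
  have hdist : hammingDist a z = D.card := rfl
  -- Δ ≥ 3
  have hΔ3 : 3 ≤ D.card := by
    have h2 : (2 : ℝ) ≤ 2 * (N : ℝ) := by
      have : (1 : ℝ) ≤ N := by exact_mod_cast hN
      linarith
    have : (2 : ℝ) < (D.card : ℝ) := by rw [hdist] at hfar; linarith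
    exact_mod_cast this
  have hsub : D ⊆ G ∪ Ba ∪ Bz := by
    intro i hi
    simp only [hD, Finset.mem_filter, Finset.mem_univ, true_and] at hi
    simp only [hG, hBa, hBz, Finset.mem_union, Finset.mem_filter, Finset.mem_univ, true_and]
    cases ha : f (flipBit n a i) with
    | true => exact Or.inl (Or.inr ⟨hi, rfl⟩)
    | false =>
      cases hz : f (flipBit n z i) with
      | true => exact Or.inr ⟨hi, rfl⟩
      | false => exact Or.inl (Or.inl ⟨hi, rfl, rfl⟩)
  -- injectivity helper
  have flip_inj : ∀ (w : Fin n → Bool), Set.InjOn (flipBit n w) D := by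
    intro w i hi j hj hij
    by_contra hne
    have h1 : flipBit n w i i = !(w i) := by simp [flipBit]
    have h2 : flipBit n w j i = w i := by
      simp [flipBit, Function.update_of_ne hne]
    rw [hij] at h1
    rw [h2] at h1
    exact (Bool.not_ne_self (w i)).symm h1
  have hBaD : Ba ⊆ D := by
    intro i hi; simp only [hBa, hD, Finset.mem_filter] at *; exact ⟨hi.1, hi.2.1⟩
  have hBzD : Bz ⊆ D := by
    intro i hi; simp only [hBz, hD, Finset.mem_filter] at *; exact ⟨hi.1, hi.2.1⟩
  -- images disjoint
  have hdisj : Disjoint (Ba.image (flipBit n a)) (Bz.image (flipBit n z)) := by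
    rw [Finset.disjoint_left]
    rintro x hx hx'
    obtain ⟨i, hi, rfl⟩ := Finset.mem_image.mp hx
    obtain ⟨j, hj, heq⟩ := Finset.mem_image.mp hx'
    -- pick k ∈ D, k ≠ i, k ≠ j
    have : ({i, j} : Finset (Fin n)).card < D.card := by
      calc ({i, j} : Finset (Fin n)).card ≤ 2 := Finset.card_insert_le _ _ |>.trans (by simp)
      _ < D.card := by omega
    have hns : ¬ D ⊆ ({i, j} : Finset (Fin n)) := fun h => absurd (Finset.card_le_card h) (by omega)
    obtain ⟨k, hkD, hk⟩ := Finset.not_subset.mp hns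
    simp only [Finset.mem_insert, Finset.mem_singleton, not_or] at hk
    have hka : flipBit n a i k = a k := by
      simp [flipBit, Function.update_of_ne hk.1]
    have hkz : flipBit n z j k = z k := by
      simp [flipBit, Function.update_of_ne hk.2]
    have : a k = z k := by rw [← hka, ← hkz, heq]
    simp only [hD, Finset.mem_filter] at hkD
    exact hkD.2 this
  have hsubsat : Ba.image (flipBit n a) ∪ Bz.image (flipBit n z) ⊆ satSet n f := by
    intro x hx
    rcases Finset.mem_union.mp hx with hx | hx
    · obtain ⟨i, hi, rfl⟩ := Finset.mem_image.mp hx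
      simp only [hBa, Finset.mem_filter] at hi
      simp only [satSet, Finset.mem_filter, Finset.mem_univ, true_and]
      exact hi.2.2
    · obtain ⟨i, hi, rfl⟩ := Finset.mem_image.mp hx
      simp only [hBz, Finset.mem_filter] at hi
      simp only [satSet, Finset.mem_filter, Finset.mem_univ, true_and]
      exact hi.2.2
  have hcards : Ba.card + Bz.card ≤ N := by
    have e1 : (Ba.image (flipBit n a)).card = Ba.card :=
      Finset.card_image_of_injOn (fun i hi j hj => flip_inj a (hBaD hi) (hBaD hj))
    have e2 : (Bz.image (flipBit n z)).card = Bz.card :=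
      Finset.card_image_of_injOn (fun i hi j hj => flip_inj z (hBzD hi) (hBzD hj))
    calc Ba.card + Bz.card = (Ba.image (flipBit n a) ∪ Bz.image (flipBit n z)).card := by
          rw [Finset.card_union_of_disjoint hdisj, e1, e2]
      _ ≤ N := Finset.card_le_card hsubsat
  have hmain : D.card ≤ G.card + N := by
    calc D.card ≤ (G ∪ Ba ∪ Bz).card := Finset.card_le_card hsub
      _ ≤ G.card + (Ba.card + Bz.card) := by
          calc (G ∪ Ba ∪ Bz).card ≤ (G ∪ Ba).card + Bz.card := Finset.card_union_le _ _
            _ ≤ G.card + Ba.card + Bz.card := by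
                have := Finset.card_union_le G Ba; omega
            _ = G.card + (Ba.card + Bz.card) := by omega
      _ ≤ G.card + N := by omega
  rw [hdist] at hfar ⊢
  have h1 : (D.card : ℝ) ≤ (G.card : ℝ) + N := by exact_mod_cast hmain
  linarith
end
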